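/- arXiv:1608.04279 — 8 statements merged into one kernel-verified Lean document; each statement's English description precedes it below -/
import Mathlib

section
/- Let d ≥ 1 and 2 ≤ k ≤ r be integers, and let n ≥ 0. Suppose there is a family of n points a : Fin n → ℝ^d such that for every function I : Fin n → Fin r (assigning each index to one of r parts) there exists a k-element subset S ⊆ Fin r with ⋂_{i ∈ S} conv{a_j : I(j) = i} = ∅. Then there is a family of n + k − 1 points b : Fin (n+k−1) → ℝ^{d+1} with the same property: for every assignment I : Fin (n+k−1) → Fin r there exists a k-element subset S ⊆ Fin r with ⋂_{i ∈ S} conv{b_j : I(j) = i} = ∅. (This is the inductive step proving T(d+1,r,k) ≥ T(d,r,k) + k − 1.) -/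
open Finset

/-- If `z` lies in the convex hull of `s`, a linear functional `f` is nonnegative on `s`
and `f z = 0`, then `z` lies in the convex hull of the zero set of `f` within `s`. -/
lemma mem_convexHull_zero_set {E : Type*} [AddCommGroup E] [Module ℝ E]
    (f : E →ₗ[ℝ] ℝ) {s : Set E} (hs : ∀ x ∈ s, 0 ≤ f x) {z : E}
    (hz : z ∈ convexHull ℝ s) (hfz : f z = 0) :
    z ∈ convexHull ℝ {x ∈ s | f x = 0} := by
  rw [_root_.convexHull_eq] at hz
  obtain ⟨ι, t, w, p, hw0, hw1, hps, hcm⟩ := hz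
  rw [Finset.centerMass_eq_of_sum_1 _ _ hw1] at hcm
  have hfsum : ∑ i ∈ t, w i * f (p i) = 0 := by
    have := congrArg f hcm
    rw [map_sum] at this
    simpa [smul_eq_mul] using this.trans hfz
  have hterm : ∀ i ∈ t, w i * f (p i) = 0 := by
    exact (Finset.sum_eq_zero_iff_of_nonneg
      (fun i hi => mul_nonneg (hw0 i hi) (hs _ (hps i hi)))).1 hfsum
  have hwzero : ∀ i ∈ t, f (p i) ≠ 0 → w i = 0 := by
    intro i hi hne
    rcases mul_eq_zero.1 (hterm i hi) with h | h
    · exact h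
    · exact absurd h hne
  set t' := t.filter (fun i => f (p i) = 0) with ht'
  have hw1' : ∑ i ∈ t', w i = 1 := by
    rw [← hw1, ht']
    rw [← Finset.sum_filter_add_sum_filter_not t (fun i => f (p i) = 0) w]
    have : ∑ i ∈ t.filter (fun i => ¬ f (p i) = 0), w i = 0 :=
      Finset.sum_eq_zero fun i hi => hwzero i (Finset.mem_filter.1 hi).1 (Finset.mem_filter.1 hi).2
    rw [this, add_zero]
  have hcm' : ∑ i ∈ t', w i • p i = z := by
    rw [← hcm, ht']
    rw [← Finset.sum_filter_add_sum_filter_not t (fun i => f (p i) = 0) (fun i => w i • p i)]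
    have : ∑ i ∈ t.filter (fun i => ¬ f (p i) = 0), w i • p i = 0 :=
      Finset.sum_eq_zero fun i hi => by
        rw [hwzero i (Finset.mem_filter.1 hi).1 (Finset.mem_filter.1 hi).2, zero_smul]
    rw [this, add_zero]
  have := Finset.centerMass_mem_convexHull (z := p) (s := {x ∈ s | f x = 0}) t'
    (fun i hi => hw0 i (Finset.mem_filter.1 hi).1)
    (by rw [hw1']; norm_num)
    (fun i hi => ⟨hps i (Finset.mem_filter.1 hi).1, (Finset.mem_filter.1 hi).2⟩)
  rwa [Finset.centerMass_eq_of_sum_1 _ _ hw1', hcm'] at this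

/-- The linear embedding of `ℝ^d` into `ℝ^(d+1)` as the hyperplane where the last
coordinate vanishes. -/
def liftMap (d : ℕ) : EuclideanSpace ℝ (Fin d) →ₗ[ℝ] EuclideanSpace ℝ (Fin (d + 1)) where
  toFun x := WithLp.toLp 2 (fun i : Fin (d + 1) => if h : (i : ℕ) < d then x ⟨i, h⟩ else 0)
  map_add' x y := by
    ext i
    by_cases h : (i : ℕ) < d <;> simp [h, PiLp.add_apply]
  map_smul' c x := by
    ext i
    by_cases h : (i : ℕ) < d <;> simp [h, PiLp.smul_apply]

/-- The last coordinate, as a linear functional on `ℝ^(d+1)`. -/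
def lastCoord (d : ℕ) : EuclideanSpace ℝ (Fin (d + 1)) →ₗ[ℝ] ℝ where
  toFun x := x (Fin.last d)
  map_add' _ _ := rfl
  map_smul' _ _ := rfl

lemma lastCoord_liftMap (d : ℕ) (x : EuclideanSpace ℝ (Fin d)) :
    lastCoord d (liftMap d x) = 0 := by
  simp [lastCoord, liftMap, Fin.last]

lemma liftMap_apply_castSucc (d : ℕ) (x : EuclideanSpace ℝ (Fin d)) (i : Fin d) :
    liftMap d x (Fin.castSucc i) = x i := by
  simp [liftMap, Fin.castSucc, i.isLt]

/-- Inductive step for the lower bound `T(d+1,r,k) ≥ T(d,r,k) + k - 1` in Reay's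
relaxed Tverberg problem: if there are `n` points in `ℝ^d` such that every partition
of the index set into `r` parts has `k` parts whose convex hulls have empty
intersection, then there are `n + k - 1` points in `ℝ^(d+1)` with the same property. -/
theorem reay_lower_bound_step (d r k n : ℕ) (hd : 1 ≤ d) (hk : 2 ≤ k) (hkr : k ≤ r)
    (a : Fin n → EuclideanSpace ℝ (Fin d))
    (ha : ∀ I : Fin n → Fin r, ∃ S : Finset (Fin r), S.card = k ∧
      (⋂ i ∈ S, convexHull ℝ (a '' {j | I j = i})) = ∅) :
    ∃ b : Fin (n + k - 1) → EuclideanSpace ℝ (Fin (d + 1)),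
      ∀ I : Fin (n + k - 1) → Fin r, ∃ S : Finset (Fin r), S.card = k ∧
        (⋂ i ∈ S, convexHull ℝ (b '' {j | I j = i})) = ∅ := by
  classical
  set L := liftMap d with hL
  set f := lastCoord d with hf
  -- the extra point at height 1
  set p : EuclideanSpace ℝ (Fin (d + 1)) := WithLp.toLp 2 (fun i : Fin (d + 1) => if (i : ℕ) < d then (0 : ℝ) else 1) with hp
  have hfp : f p = 1 := by simp [hf, hp, lastCoord, Fin.last]
  have hn : n ≤ n + k - 1 := by omega
  refine ⟨fun j => if h : (j : ℕ) < n then L (a ⟨j, h⟩) else p, ?_⟩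
  set b : Fin (n + k - 1) → EuclideanSpace ℝ (Fin (d + 1)) :=
    fun j => if h : (j : ℕ) < n then L (a ⟨j, h⟩) else p with hb
  intro I
  set I' : Fin n → Fin r := fun j => I (Fin.castLE hn j) with hI'
  obtain ⟨S, hScard, hSempty⟩ := ha I'
  refine ⟨S, hScard, ?_⟩
  by_contra hne
  obtain ⟨z, hz⟩ := Set.nonempty_iff_ne_empty.2 hne
  have hzS : ∀ i ∈ S, z ∈ convexHull ℝ (b '' {j | I j = i}) := Set.mem_iInter₂.1 hz
  -- the parts containing one of the `k-1` new points
  set T : Finset (Fin r) :=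
    Finset.image (fun j : Fin (k - 1) => I ⟨n + (j : ℕ), by omega⟩) Finset.univ with hT
  have hTcard : T.card ≤ k - 1 := by
    calc T.card ≤ (Finset.univ : Finset (Fin (k - 1))).card := Finset.card_image_le
    _ = k - 1 := by simp
  have hTmem : ∀ j : Fin (n + k - 1), ¬ (j : ℕ) < n → I j ∈ T := by
    intro j hj
    have h1 : (j : ℕ) - n < k - 1 := by omega
    refine Finset.mem_image.2 ⟨⟨(j : ℕ) - n, h1⟩, Finset.mem_univ _, ?_⟩
    congr 1
    exact Fin.ext (by simp; omega)
  -- a part in `S` not containing a new point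
  have hex : ∃ i0 ∈ S, i0 ∉ T := by
    by_contra h
    push_neg at h
    have := Finset.card_le_card h
    omega
  obtain ⟨i0, hi0S, hi0T⟩ := hex
  -- `f` vanishes on part `i0`, hence `f z = 0`
  have hf0 : b '' {j | I j = i0} ⊆ {x | f x = 0} := by
    rintro x ⟨j, hj, rfl⟩
    by_cases h : (j : ℕ) < n
    · simp only [hb, dif_pos h]
      exact lastCoord_liftMap d _
    · exact absurd (hj ▸ hTmem j h) hi0T
  have hfz : f z = 0 :=
    convexHull_min hf0 (convex_hyperplane f.isLinear 0) (hzS i0 hi0S)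
  -- `f` is nonnegative on every part
  have hfnn : ∀ i : Fin r, ∀ x ∈ b '' {j | I j = i}, 0 ≤ f x := by
    rintro i x ⟨j, hj, rfl⟩
    by_cases h : (j : ℕ) < n
    · simp only [hb, dif_pos h]
      rw [lastCoord_liftMap d]
    · simp only [hb, dif_neg h]
      rw [hfp]; norm_num
  -- the common point downstairs
  set w : EuclideanSpace ℝ (Fin d) := WithLp.toLp 2 (fun i => z (Fin.castSucc i)) with hw
  have hwmem : ∀ i ∈ S, w ∈ convexHull ℝ (a '' {j | I' j = i}) := by
    intro i hi
    have h1 := mem_convexHull_zero_set f (hfnn i) (hzS i hi) hfz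
    have h2 : {x ∈ b '' {j | I j = i} | f x = 0} ⊆ L '' (a '' {j | I' j = i}) := by
      rintro x ⟨⟨j, hj, rfl⟩, hfx⟩
      by_cases h : (j : ℕ) < n
      · refine ⟨a ⟨(j : ℕ), h⟩, ⟨⟨(j : ℕ), h⟩, ?_, rfl⟩, ?_⟩
        · show I (Fin.castLE hn ⟨(j : ℕ), h⟩) = i
          rwa [show Fin.castLE hn ⟨(j : ℕ), h⟩ = j from Fin.ext rfl]
        · simp only [hb, dif_pos h] at hfx ⊢
      · exfalso
        simp only [hb, dif_neg h] at hfx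
        rw [hfp] at hfx
        norm_num at hfx
    have h3 := convexHull_mono h2 h1
    rw [← L.image_convexHull] at h3
    obtain ⟨u, hu, huz⟩ := h3
    have huw : u = w := by
      ext i2
      have := congrArg (fun v : EuclideanSpace ℝ (Fin (d + 1)) => v (Fin.castSucc i2)) huz
      rw [show (L u) (Fin.castSucc i2) = u i2 from liftMap_apply_castSucc d u i2] at this
      rw [hw]; exact this
    rwa [huw] at hu
  rw [Set.eq_empty_iff_forall_notMem] at hSempty
  exact hSempty w (Set.mem_iInter₂.2 hwmem)
end

section
/- Let d ≥ 1 and 2 ≤ k ≤ r be integers. Let X ⊆ ℝ^d be a finite set in strong general position, and suppose X admits a partition into r pairwise disjoint subsets X_1, …, X_r (with X = X_1 ∪ … ∪ X_r) such that for every k-element subset S ⊆ {1,…,r} the intersection ⋂_{i∈S} conv(X_i) is nonempty. Then k · |X| ≥ r · ((k−1)·d + k), i.e. |X| ≥ r((k−1)d/k + 1). -/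
open Finset

lemma aux_card {d : ℕ} (s : Finset (EuclideanSpace ℝ (Fin d))) (hs : s.Nonempty) :
    Module.finrank ℝ (vectorSpan ℝ (s : Set (EuclideanSpace ℝ (Fin d)))) + 1 ≤ s.card := by
  have : Nonempty {x // x ∈ s} := ⟨⟨hs.choose, hs.choose_spec⟩⟩
  have h := finrank_vectorSpan_range_add_one_le ℝ ((↑) : {x // x ∈ s} → (EuclideanSpace ℝ (Fin d)))
  rw [show Set.range ((↑) : {x // x ∈ s} → (EuclideanSpace ℝ (Fin d))) = ↑s by ext x; simp] at h
  simpa [Fintype.card_coe] using h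

lemma aux_count {r k : ℕ} (f : Fin r → ℕ) (hk : k ≤ r) (hk1 : 1 ≤ k) :
    ∑ S ∈ powersetCard k (univ : Finset (Fin r)), ∑ i ∈ S, f i
      = Nat.choose (r-1) (k-1) * ∑ i, f i := by
  have key : ∀ i : Fin r,
      ((powersetCard k (univ : Finset (Fin r))).filter (fun S => i ∈ S)).card
        = Nat.choose (r-1) (k-1) := by
    intro i
    have hcard : #((univ : Finset (Fin r)).erase i) = r - 1 := by simp
    rw [← hcard, ← Finset.card_powersetCard (k-1) ((univ : Finset (Fin r)).erase i)]
    refine Finset.card_bij (fun S _ => S.erase i) ?_ ?_ ?_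
    · intro S hS
      simp only [mem_filter, mem_powersetCard] at hS
      rw [mem_powersetCard]
      refine ⟨fun x hx => ?_, ?_⟩
      · rcases Finset.mem_erase.1 hx with ⟨hxi, hxS⟩
        exact Finset.mem_erase.2 ⟨hxi, hS.1.1 hxS⟩
      · rw [Finset.card_erase_of_mem hS.2, hS.1.2]
    · intro S hS T hT hST
      simp only [mem_filter] at hS hT
      have hST' : S.erase i = T.erase i := hST
      rw [← Finset.insert_erase hS.2, ← Finset.insert_erase hT.2, hST']
    · intro T hT
      rw [mem_powersetCard] at hT
      refine ⟨insert i T, ?_, ?_⟩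
      · simp only [mem_filter, mem_powersetCard]
        have hiT : i ∉ T := fun h => (Finset.mem_erase.1 (hT.1 h)).1 rfl
        refine ⟨⟨Finset.subset_univ _, ?_⟩, Finset.mem_insert_self _ _⟩
        rw [Finset.card_insert_of_notMem hiT, hT.2]
        omega
      · show (insert i T).erase i = T
        rw [Finset.erase_insert (fun h => (Finset.mem_erase.1 (hT.1 h)).1 rfl)]
  calc ∑ S ∈ powersetCard k (univ : Finset (Fin r)), ∑ i ∈ S, f i
      = ∑ S ∈ powersetCard k (univ : Finset (Fin r)), ∑ i : Fin r, if i ∈ S then f i else 0 := by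
        refine Finset.sum_congr rfl fun S _ => ?_
        rw [Finset.sum_ite_mem, Finset.univ_inter]
    _ = ∑ i : Fin r, ∑ S ∈ powersetCard k (univ : Finset (Fin r)), if i ∈ S then f i else 0 :=
        Finset.sum_comm
    _ = ∑ i : Fin r, Nat.choose (r-1) (k-1) * f i := by
        refine Finset.sum_congr rfl fun i _ => ?_
        rw [← Finset.sum_filter, Finset.sum_const, smul_eq_mul, key i]
    _ = Nat.choose (r-1) (k-1) * ∑ i, f i := by rw [Finset.mul_sum]

/-- A set `X ⊆ ℝ^d` is in *strong general position* if for every `s ≥ 2` and all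
pairwise disjoint nonempty subsets `Y 0, …, Y (s-1)` of `X`, either the intersection
of their affine spans is empty, or its codimension equals the sum of the codimensions
of the affine spans. -/
def StrongGeneralPosition {d : ℕ} (X : Set (EuclideanSpace ℝ (Fin d))) : Prop :=
  ∀ s : ℕ, 2 ≤ s → ∀ Y : Fin s → Set (EuclideanSpace ℝ (Fin d)),
    (∀ i, Y i ⊆ X) → (∀ i, (Y i).Nonempty) →
    Pairwise (Function.onFun Disjoint Y) →
    ((⨅ i, affineSpan ℝ (Y i) : AffineSubspace ℝ (EuclideanSpace ℝ (Fin d))) :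
        Set (EuclideanSpace ℝ (Fin d))) = ∅ ∨
      d - Module.finrank ℝ (⨅ i, affineSpan ℝ (Y i)).direction =
        ∑ i, (d - Module.finrank ℝ (affineSpan ℝ (Y i)).direction)

/-- If a finite set `X ⊆ ℝ^d` in strong general position admits a partition into `r`
pairwise disjoint parts such that every `k` of the parts have intersecting convex
hulls, then `k·|X| ≥ r·((k-1)·d + k)`, i.e. `|X| ≥ r((k-1)d/k + 1)`. -/
theorem reay_strong_general_position_bound (d r k : ℕ) (hd : 1 ≤ d) (hk : 2 ≤ k)
    (hkr : k ≤ r) (X : Finset (EuclideanSpace ℝ (Fin d)))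
    (hsgp : StrongGeneralPosition (X : Set (EuclideanSpace ℝ (Fin d))))
    (P : Fin r → Finset (EuclideanSpace ℝ (Fin d)))
    (hdisj : Pairwise (Function.onFun Disjoint P))
    (hunion : (X : Set (EuclideanSpace ℝ (Fin d))) = ⋃ i, (P i : Set (EuclideanSpace ℝ (Fin d))))
    (hint : ∀ S : Finset (Fin r), S.card = k →
      (⋂ i ∈ S, convexHull ℝ (P i : Set (EuclideanSpace ℝ (Fin d)))).Nonempty) :
    r * ((k - 1) * d + k) ≤ k * X.card := by
  classical
  -- every part is a subset of X
  have hPX : ∀ i, (P i : Set (EuclideanSpace ℝ (Fin d))) ⊆ (X : Set (EuclideanSpace ℝ (Fin d))) := by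
    intro i
    rw [hunion]
    exact Set.subset_iUnion (fun i => (P i : Set (EuclideanSpace ℝ (Fin d)))) i
  -- every part is nonempty
  have hne : ∀ i, (P i).Nonempty := by
    intro i
    obtain ⟨S, hiS, hScard⟩ :=
      Finset.exists_superset_card_eq (s := {i}) (n := k)
        (by simpa using Nat.one_le_of_lt hk) (by simpa using hkr)
    obtain ⟨x, hx⟩ := hint S hScard
    have hxP : x ∈ convexHull ℝ (P i : Set (EuclideanSpace ℝ (Fin d))) :=
      Set.mem_iInter₂.1 hx i (hiS (Finset.mem_singleton_self i))
    rcases (P i).eq_empty_or_nonempty with h | h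
    · rw [h] at hxP; simp at hxP
    · exact h
  -- dimension of each affine span is at most d
  have hdim_le : ∀ i : Fin r,
      Module.finrank ℝ (affineSpan ℝ (P i : Set (EuclideanSpace ℝ (Fin d)))).direction ≤ d := by
    intro i
    have := Submodule.finrank_le (affineSpan ℝ (P i : Set (EuclideanSpace ℝ (Fin d)))).direction
    rwa [finrank_euclideanSpace_fin] at this
  -- the key per-subset bound
  have key : ∀ S : Finset (Fin r), S.card = k →
      (k - 1) * d + k ≤ ∑ i ∈ S, (P i).card := by
    intro S hScard
    obtain ⟨x, hx⟩ := hint S hScard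
    set e := S.orderIsoOfFin hScard with he
    set Y : Fin k → Set (EuclideanSpace ℝ (Fin d)) := fun j => (P (e j) : Set (EuclideanSpace ℝ (Fin d))) with hY
    have hYX : ∀ j, Y j ⊆ (X : Set (EuclideanSpace ℝ (Fin d))) := fun j => hPX _
    have hYne : ∀ j, (Y j).Nonempty := fun j => Finset.coe_nonempty.2 (hne _)
    have hYdisj : Pairwise (Function.onFun Disjoint Y) := by
      intro j j' hjj'
      have : (e j : Fin r) ≠ (e j' : Fin r) := by
        intro hcontra
        exact hjj' (e.injective (Subtype.ext hcontra))
      exact Finset.disjoint_coe.2 (hdisj this)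
    have hxY : ∀ j, x ∈ affineSpan ℝ (Y j) := by
      intro j
      exact convexHull_subset_affineSpan _
        (Set.mem_iInter₂.1 hx (e j) (e j).2)
    have hxinf : x ∈ (⨅ j, affineSpan ℝ (Y j) : AffineSubspace ℝ (EuclideanSpace ℝ (Fin d))) := by
      have h1 : affineSpan ℝ ({x} : Set (EuclideanSpace ℝ (Fin d))) ≤ ⨅ j, affineSpan ℝ (Y j) :=
        le_iInf fun j => affineSpan_le.2 (Set.singleton_subset_iff.2 (hxY j))
      exact h1 (mem_affineSpan ℝ (Set.mem_singleton x))
    rcases hsgp k hk Y hYX hYne hYdisj with hempty | hsum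
    · exact absurd hempty (Set.nonempty_iff_ne_empty.1 ⟨x, hxinf⟩)
    · -- transfer the sum over Fin k to a sum over S
      have hsum' : ∑ j : Fin k, (d - Module.finrank ℝ (affineSpan ℝ (Y j)).direction)
          = ∑ i ∈ S, (d - Module.finrank ℝ (affineSpan ℝ (P i : Set (EuclideanSpace ℝ (Fin d)))).direction) := by
        rw [← Finset.sum_attach S
          (fun i => d - Module.finrank ℝ (affineSpan ℝ (P i : Set (EuclideanSpace ℝ (Fin d)))).direction)]
        exact Equiv.sum_comp e.toEquiv
          (fun i : S => d - Module.finrank ℝ (affineSpan ℝ (P (i : Fin r) : Set (EuclideanSpace ℝ (Fin d)))).direction)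
      have hled : ∑ i ∈ S, (d - Module.finrank ℝ (affineSpan ℝ (P i : Set (EuclideanSpace ℝ (Fin d)))).direction) ≤ d := by
        rw [← hsum', ← hsum]
        exact Nat.sub_le _ _
      -- sum of dimensions is at least (k-1)*d
      have htotal : ∑ i ∈ S, (Module.finrank ℝ (affineSpan ℝ (P i : Set (EuclideanSpace ℝ (Fin d)))).direction
          + (d - Module.finrank ℝ (affineSpan ℝ (P i : Set (EuclideanSpace ℝ (Fin d)))).direction)) = k * d := by
        rw [Finset.sum_congr rfl (fun i _ => Nat.add_sub_cancel' (hdim_le i)),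
          Finset.sum_const, hScard, smul_eq_mul]
      rw [Finset.sum_add_distrib] at htotal
      have h1 : ∑ i ∈ S, Module.finrank ℝ (affineSpan ℝ (P i : Set (EuclideanSpace ℝ (Fin d)))).direction
          = k * d - ∑ i ∈ S, (d - Module.finrank ℝ (affineSpan ℝ (P i : Set (EuclideanSpace ℝ (Fin d)))).direction) :=
        Nat.eq_sub_of_add_eq htotal
      have hcard_ge : ∀ i ∈ S,
          Module.finrank ℝ (affineSpan ℝ (P i : Set (EuclideanSpace ℝ (Fin d)))).direction + 1 ≤ (P i).card := by
        intro i _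
        have := aux_card (P i) (hne i)
        rwa [direction_affineSpan]
      calc (k - 1) * d + k = (k * d - d) + k := by rw [Nat.sub_one_mul]
        _ ≤ (k * d - ∑ i ∈ S, (d - Module.finrank ℝ (affineSpan ℝ (P i : Set (EuclideanSpace ℝ (Fin d)))).direction)) + k :=
            Nat.add_le_add_right (Nat.sub_le_sub_left hled _) k
        _ = (∑ i ∈ S, Module.finrank ℝ (affineSpan ℝ (P i : Set (EuclideanSpace ℝ (Fin d)))).direction) + k := by rw [h1]
        _ = ∑ i ∈ S, (Module.finrank ℝ (affineSpan ℝ (P i : Set (EuclideanSpace ℝ (Fin d)))).direction + 1) := by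
            rw [Finset.sum_add_distrib, Finset.sum_const, hScard, smul_eq_mul, mul_one]
        _ ≤ ∑ i ∈ S, (P i).card := Finset.sum_le_sum hcard_ge
  -- the cardinality of X is the sum of the cardinalities of the parts
  have hXcard : X.card = ∑ i, (P i).card := by
    have hX : X = Finset.univ.biUnion P := by
      apply Finset.coe_injective
      rw [hunion, Finset.coe_biUnion]
      simp
    rw [hX, Finset.card_biUnion (fun i _ j _ hij => hdisj hij)]
  -- double counting
  have hsum_ge : Nat.choose r k * ((k - 1) * d + k)
      ≤ Nat.choose (r - 1) (k - 1) * ∑ i, (P i).card := by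
    rw [← aux_count (fun i => (P i).card) hkr (by omega)]
    calc Nat.choose r k * ((k - 1) * d + k)
        = ∑ _S ∈ powersetCard k (univ : Finset (Fin r)), ((k - 1) * d + k) := by
          rw [Finset.sum_const, card_powersetCard, card_univ, Fintype.card_fin, smul_eq_mul]
      _ ≤ ∑ S ∈ powersetCard k (univ : Finset (Fin r)), ∑ i ∈ S, (P i).card :=
          Finset.sum_le_sum (fun S hS => key S (Finset.mem_powersetCard.1 hS).2)
  have hid : r * Nat.choose (r - 1) (k - 1) = Nat.choose r k * k := by
    have h := Nat.add_one_mul_choose_eq (r - 1) (k - 1)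
    rwa [show r - 1 + 1 = r by omega, show k - 1 + 1 = k by omega] at h
  have hCpos : 0 < Nat.choose (r - 1) (k - 1) := Nat.choose_pos (by omega)
  refine Nat.le_of_mul_le_mul_left ?_ hCpos
  calc Nat.choose (r - 1) (k - 1) * (r * ((k - 1) * d + k))
      = k * (Nat.choose r k * ((k - 1) * d + k)) := by
        rw [← mul_assoc, mul_comm (Nat.choose (r - 1) (k - 1)) r, hid]; ring
    _ ≤ k * (Nat.choose (r - 1) (k - 1) * ∑ i, (P i).card) := Nat.mul_le_mul_left k hsum_ge
    _ = Nat.choose (r - 1) (k - 1) * (k * X.card) := by rw [hXcard]; ring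
end

section
/- Let d ≥ 1, r ≥ 2, and ⌈r/2⌉ < k ≤ r be integers. There exist points c_{j,s} ∈ ℝ^d, indexed by pairs (j,s) with j ∈ {0,1,…,d} and s ∈ {1,…,r} for j ≥ 1, while s ∈ {1,…,r−1} for j = 0 (points not necessarily distinct), with the following property: for all pairwise disjoint subsets X_1, …, X_r of the index set such that each X_i contains, for every j, at most one pair with first coordinate j (i.e. X_i picks at most one point from each color class C_j), there exist k indices i_1 < … < i_k in {1,…,r} with ⋂_{l=1}^{k} conv{c_p : p ∈ X_{i_l}} = ∅. -/
/-- Colored version of Reay's conjecture: for `d ≥ 1`, `r ≥ 2` and `⌈r/2⌉ < k ≤ r`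
there are color classes `C₀` of size `r - 1` (indexed by `Fin (r-1)`, i.e. by
`Sum.inl`) and `C₁, …, C_d` each of size `r` (the class `C_{j+1}` indexed by the
pairs `Sum.inr (j, s)` with `s : Fin r`) of points in `ℝ^d` such that for all
pairwise disjoint rainbow subsets `X₁, …, X_r` of the index set (each using at most
one index from every color class) there are `k` of them whose convex hulls have
empty intersection. -/
theorem colored_reay (d r k : ℕ) (hd : 1 ≤ d) (hr : 2 ≤ r)
    (hk₁ : (r + 1) / 2 < k) (hk₂ : k ≤ r) :
    ∃ c : (Fin (r - 1) ⊕ Fin d × Fin r) → EuclideanSpace ℝ (Fin d),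
      ∀ X : Fin r → Set (Fin (r - 1) ⊕ Fin d × Fin r),
        Pairwise (Function.onFun Disjoint X) →
        (∀ i, ∀ p q : Fin (r - 1), Sum.inl p ∈ X i → Sum.inl q ∈ X i → p = q) →
        (∀ i, ∀ j : Fin d, ∀ s t : Fin r,
          Sum.inr (j, s) ∈ X i → Sum.inr (j, t) ∈ X i → s = t) →
        ∃ S : Finset (Fin r), S.card = k ∧
          (⋂ i ∈ S, convexHull ℝ (c '' X i)) = ∅ := by
  classical
  set m : ℕ := (r + 1) / 2 with hm
  set ε : Fin r → ℝ := fun s => if (s : ℕ) < m then 1 else -1 with hε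
  refine ⟨Sum.elim (fun _ => (0 : EuclideanSpace ℝ (Fin d)))
      (fun js => EuclideanSpace.single js.1 (ε js.2)), ?_⟩
  intro X hdisj hX2 hX3
  -- a part with no `C₀` index
  have h0 : ∃ i : Fin r, ∀ p : Fin (r - 1), Sum.inl p ∉ X i := by
    by_contra h
    push_neg at h
    choose g hg using h
    have hginj : Function.Injective g := by
      intro a b hab
      by_contra hne
      exact Set.disjoint_left.mp (hdisj hne) (hg a) (hab ▸ hg b)
    have := Fintype.card_le_of_injective g hginj
    simp only [Fintype.card_fin] at this
    omega
  obtain ⟨i₀, hi₀⟩ := h0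
  -- a `k`-element set of indices containing `i₀`
  obtain ⟨S, hSsub, -, hScard⟩ :=
    Finset.exists_subsuperset_card_eq (Finset.subset_univ {i₀})
      (by simpa using by omega : ({i₀} : Finset (Fin r)).card ≤ k)
      (by simpa using hk₂)
  refine ⟨S, hScard, ?_⟩
  by_contra hne
  obtain ⟨x, hx⟩ := Set.nonempty_iff_ne_empty.mpr hne
  have hmem : ∀ i ∈ S, x ∈ convexHull ℝ
      ((Sum.elim (fun _ => (0 : EuclideanSpace ℝ (Fin d)))
        (fun js => EuclideanSpace.single js.1 (ε js.2))) '' X i) := by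
    intro i hi
    exact Set.mem_iInter₂.mp hx i hi
  -- linearity helper
  have hlin : ∀ g : Fin d → ℝ,
      IsLinearMap ℝ (fun y : EuclideanSpace ℝ (Fin d) => ∑ j, g j * y j) := by
    intro g
    constructor
    · intro y z
      simp [PiLp.add_apply, mul_add, Finset.sum_add_distrib]
    · intro a y
      simp only [PiLp.smul_apply, smul_eq_mul, Finset.mul_sum]
      exact Finset.sum_congr rfl (fun i _ => by ring)
  -- the functional determined by the signs used in `X i₀`
  set g : Fin d → ℝ := fun j =>
    if h : ∃ s : Fin r, Sum.inr (j, s) ∈ X i₀ then ε h.choose else 0 with hg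
  have hi₀S : i₀ ∈ S := hSsub (Finset.mem_singleton_self i₀)
  have hLx : ∑ j, g j * x j = 1 := by
    have hsub : (Sum.elim (fun _ => (0 : EuclideanSpace ℝ (Fin d)))
        (fun js => EuclideanSpace.single js.1 (ε js.2))) '' X i₀ ⊆
        {y : EuclideanSpace ℝ (Fin d) | ∑ j, g j * y j = 1} := by
      rintro y ⟨idx, hidx, rfl⟩
      rcases idx with p | ⟨j, s⟩
      · exact absurd hidx (hi₀ p)
      · have hex : ∃ s : Fin r, Sum.inr (j, s) ∈ X i₀ := ⟨s, hidx⟩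
        have hchoose : hex.choose = s := hX3 i₀ j hex.choose s hex.choose_spec hidx
        have hval : ∀ j' : Fin d,
            g j' * (EuclideanSpace.single j (ε s) : EuclideanSpace ℝ (Fin d)) j'
              = if j' = j then (1 : ℝ) else 0 := by
          intro j'
          rcases eq_or_ne j' j with rfl | hne'
          · simp only [EuclideanSpace.single_apply, if_pos rfl, hg, dif_pos hex, hchoose]
            have : ε s = 1 ∨ ε s = -1 := by
              by_cases h : (s : ℕ) < m <;> simp [hε, h]
            rcases this with h | h <;> simp [h]
          · simp [EuclideanSpace.single_apply, hne']
        simp only [Set.mem_setOf_eq, Sum.elim_inr]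
        rw [Finset.sum_congr rfl (fun j' _ => hval j')]
        simp
    have := convexHull_min hsub (convex_hyperplane (hlin g) 1) (hmem i₀ hi₀S)
    exact this
  have hxne : ∃ j : Fin d, x j ≠ 0 := by
    by_contra h
    push_neg at h
    rw [Finset.sum_congr rfl (fun j _ => by rw [h j, mul_zero])] at hLx
    simp at hLx
  obtain ⟨j₀, hj₀⟩ := hxne
  rcases hj₀.lt_or_gt with hneg | hpos
  · -- x j₀ < 0 : every part in S uses a negative point of class j₀
    have key : ∀ i ∈ S, ∃ s : Fin r, Sum.inr (j₀, s) ∈ X i ∧ ¬ ((s : ℕ) < m) := by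
      intro i hi
      by_contra hno
      push_neg at hno
      have hsub : (Sum.elim (fun _ => (0 : EuclideanSpace ℝ (Fin d)))
          (fun js => EuclideanSpace.single js.1 (ε js.2))) '' X i ⊆
          {y : EuclideanSpace ℝ (Fin d) | 0 ≤ y j₀} := by
        rintro y ⟨idx, hidx, rfl⟩
        rcases idx with p | ⟨j, s⟩
        · simp
        · simp only [Set.mem_setOf_eq, Sum.elim_inr, EuclideanSpace.single_apply]
          rcases eq_or_ne j₀ j with rfl | hne'
          · have hs : (s : ℕ) < m := hno s hidx
            simp [hε, hs]
          · simp [hne']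
      have hlin0 : IsLinearMap ℝ (fun y : EuclideanSpace ℝ (Fin d) => y j₀) := by
        constructor
        · intro y z; simp [PiLp.add_apply]
        · intro a y; simp [PiLp.smul_apply]
      have := convexHull_min hsub (convex_halfSpace_ge hlin0 0) (hmem i hi)
      simp only [Set.mem_setOf_eq] at this
      linarith
    choose f hf1 hf2 using key
    have hinj : ∀ i, ∀ hi : i ∈ S, ∀ i', ∀ hi' : i' ∈ S, f i hi = f i' hi' → i = i' := by
      intro i hi i' hi' hff
      by_contra hii
      exact Set.disjoint_left.mp (hdisj hii) (hf1 i hi) (by rw [hff]; exact hf1 i' hi')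
    -- map into `Fin (r - m)`
    have hcard : S.card ≤ r - m := by
      have : Function.Injective (fun i : {i // i ∈ S} =>
          (⟨(f i.1 i.2 : ℕ) - m, by
            have h1 := (f i.1 i.2).isLt
            have h2 := hf2 i.1 i.2
            omega⟩ : Fin (r - m))) := by
        rintro ⟨a, ha⟩ ⟨b, hb⟩ hab
        simp only [Fin.mk.injEq] at hab
        have h2a := hf2 a ha
        have h2b := hf2 b hb
        have : (f a ha : ℕ) = (f b hb : ℕ) := by omega
        exact Subtype.ext (hinj a ha b hb (Fin.ext this))
      have := Fintype.card_le_of_injective _ this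
      simpa [Fintype.card_coe] using this
    omega
  · -- x j₀ > 0 : every part in S uses a positive point of class j₀
    have key : ∀ i ∈ S, ∃ s : Fin r, Sum.inr (j₀, s) ∈ X i ∧ (s : ℕ) < m := by
      intro i hi
      by_contra hno
      push_neg at hno
      have hsub : (Sum.elim (fun _ => (0 : EuclideanSpace ℝ (Fin d)))
          (fun js => EuclideanSpace.single js.1 (ε js.2))) '' X i ⊆
          {y : EuclideanSpace ℝ (Fin d) | y j₀ ≤ 0} := by
        rintro y ⟨idx, hidx, rfl⟩
        rcases idx with p | ⟨j, s⟩
        · simp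
        · simp only [Set.mem_setOf_eq, Sum.elim_inr, EuclideanSpace.single_apply]
          rcases eq_or_ne j₀ j with rfl | hne'
          · have hs : ¬ ((s : ℕ) < m) := Nat.not_lt.mpr (hno s hidx)
            simp [hε, hs]
          · simp [hne']
      have hlin0 : IsLinearMap ℝ (fun y : EuclideanSpace ℝ (Fin d) => y j₀) := by
        constructor
        · intro y z; simp [PiLp.add_apply]
        · intro a y; simp [PiLp.smul_apply]
      have := convexHull_min hsub (convex_halfSpace_le hlin0 0) (hmem i hi)
      simp only [Set.mem_setOf_eq] at this
      linarith
    choose f hf1 hf2 using key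
    have hinj : ∀ i, ∀ hi : i ∈ S, ∀ i', ∀ hi' : i' ∈ S, f i hi = f i' hi' → i = i' := by
      intro i hi i' hi' hff
      by_contra hii
      exact Set.disjoint_left.mp (hdisj hii) (hf1 i hi) (by rw [hff]; exact hf1 i' hi')
    have hcard : S.card ≤ m := by
      have : Function.Injective (fun i : {i // i ∈ S} =>
          (⟨(f i.1 i.2 : ℕ), hf2 i.1 i.2⟩ : Fin m)) := by
        rintro ⟨a, ha⟩ ⟨b, hb⟩ hab
        simp only [Fin.mk.injEq] at hab
        exact Subtype.ext (hinj a ha b hb (Fin.ext hab))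
      have := Fintype.card_le_of_injective _ this
      simpa [Fintype.card_coe] using this
    omega
end

section
/- Let d ≥ 2, let V be a finite set, let F be a finite family of d-element subsets of V (the facets, all distinct), and let f : V → ℝ^d be a map such that: (i) for each σ ∈ F the d points {f(v) : v ∈ σ} are affinely independent (so f embeds each facet); (ii) for any two distinct σ, τ ∈ F the set conv(f(σ)) ∩ conv(f(τ)) is nonempty and its affine span has dimension exactly d − 2 (i.e. the intersection is a (d−2)-ball, being a nonempty compact convex set of dimension d−2). Let m = |F| and let n be the number of ridges, i.e. n = |{ρ ⊆ V : |ρ| = d−1 and ρ ⊆ σ for some σ ∈ F}|. Then d·m ≤ 2·n. -/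
open Finset
set_option linter.unusedSectionVars false

section ConeBasics

variable {E : Type} [AddCommGroup E] [Module ℝ E] {V : Type*} [DecidableEq V]

/-- The cone of nonnegative combinations of `g v`, `v ∈ σ`. -/
def coneOf (g : V → E) (σ : Finset V) : Set E :=
  {x | ∃ c : V → ℝ, (∀ v, 0 ≤ c v) ∧ ∑ v ∈ σ, c v • g v = x}

lemma gen_mem_coneOf (g : V → E) {σ : Finset V} {v : V} (hv : v ∈ σ) :
    g v ∈ coneOf g σ := by
  refine ⟨fun w => if w = v then 1 else 0, fun w => by positivity, ?_⟩
  rw [Finset.sum_eq_single v]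
  · simp
  · intro b _ hb; simp [hb]
  · intro h; exact absurd hv h

lemma zero_mem_coneOf (g : V → E) (σ : Finset V) : (0 : E) ∈ coneOf g σ :=
  ⟨fun _ => 0, fun _ => le_refl 0, by simp⟩

lemma smul_mem_coneOf {g : V → E} {σ : Finset V} {y : E} {t : ℝ}
    (ht : 0 ≤ t) (hy : y ∈ coneOf g σ) : t • y ∈ coneOf g σ := by
  obtain ⟨c, hc, hsum⟩ := hy
  exact ⟨fun v => t * c v, fun v => mul_nonneg ht (hc v), by
    simp only [mul_smul, ← Finset.smul_sum, hsum]⟩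

lemma add_gen_mem_coneOf {g : V → E} {σ : Finset V} {x : V} (hx : x ∈ σ)
    {y : E} {r : ℝ} (hr : 0 ≤ r) (hy : y ∈ coneOf g σ) : y + r • g x ∈ coneOf g σ := by
  obtain ⟨c, hc, hsum⟩ := hy
  refine ⟨fun v => c v + (if v = x then r else 0), fun v => ?_, ?_⟩
  · have h1 := hc v
    have h2 := hc x
    by_cases hvx : v = x <;> simp [hvx] <;> linarith
  have : ∑ v ∈ σ, (c v + (if v = x then r else 0)) • g v
      = (∑ v ∈ σ, c v • g v) + ∑ v ∈ σ, (if v = x then r else 0) • g v := by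
    rw [← Finset.sum_add_distrib]; congr 1; ext v; rw [add_smul]
  rw [this, hsum]
  congr 1
  rw [Finset.sum_eq_single x]
  · simp
  · intro b _ hb; simp [hb]
  · intro h; exact absurd hx h

lemma coneOf_subset_span (g : V → E) (σ : Finset V) :
    coneOf g σ ⊆ (Submodule.span ℝ (g '' σ) : Submodule ℝ E) := by
  rintro y ⟨c, _, rfl⟩
  exact Submodule.sum_mem _ (fun v hv => Submodule.smul_mem _ _
    (Submodule.subset_span ⟨v, hv, rfl⟩))

/-- Extract vanishing of coefficients from linear independence on a facet. -/
lemma coeff_eq_zero {g : V → E} {σ : Finset V}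
    (h : LinearIndependent ℝ (fun v : σ => g v)) {c : V → ℝ}
    (hc : ∑ v ∈ σ, c v • g v = 0) : ∀ v ∈ σ, c v = 0 := by
  have key := Fintype.linearIndependent_iff.mp h (fun v : σ => c v)
  have hs : ∑ i : σ, c i • g i = ∑ v ∈ σ, c v • g v :=
    Finset.sum_coe_sort σ (fun v => c v • g v)
  intro v hv
  exact key (by rw [hs, hc]) ⟨v, hv⟩

lemma coeff_eq {g : V → E} {σ : Finset V}
    (h : LinearIndependent ℝ (fun v : σ => g v)) {c d : V → ℝ}
    (hc : ∑ v ∈ σ, c v • g v = ∑ v ∈ σ, d v • g v) : ∀ v ∈ σ, c v = d v := by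
  have : ∑ v ∈ σ, (c v - d v) • g v = 0 := by
    simp only [sub_smul, Finset.sum_sub_distrib, hc, sub_self]
  intro v hv
  have := coeff_eq_zero h this v hv
  linarith

lemma gen_ne_zero {g : V → E} {σ : Finset V}
    (h : LinearIndependent ℝ (fun v : σ => g v)) {v : V} (hv : v ∈ σ) : g v ≠ 0 := by
  intro h0
  have : ∑ w ∈ σ, (fun w => if w = v then (1:ℝ) else 0) w • g w = 0 := by
    rw [Finset.sum_eq_single v]
    · simp [h0]
    · intro b _ hb; simp [hb]
    · intro h'; exact absurd hv h'
  have := coeff_eq_zero h this v hv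
  simp at this

/-- Image of a cone under a linear map. -/
lemma coneOf_map {F' : Type} [AddCommGroup F'] [Module ℝ F'] (π : E →ₗ[ℝ] F')
    (g : V → E) (σ : Finset V) : π '' coneOf g σ = coneOf (π ∘ g) σ := by
  ext y
  constructor
  · rintro ⟨z, ⟨c, hc, rfl⟩, rfl⟩
    exact ⟨c, hc, by simp [map_sum]⟩
  · rintro ⟨c, hc, rfl⟩
    exact ⟨∑ v ∈ σ, c v • g v, ⟨c, hc, rfl⟩, by simp [map_sum]⟩

end ConeBasics
section Ridges
open Finset
set_option linter.unusedSectionVars false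

variable {V : Type*} [Fintype V] [DecidableEq V]

/-- The `j`-element subsets of members of `F`. -/
def ridgeSet (F : Finset (Finset V)) (j : ℕ) : Finset (Finset V) :=
  Finset.univ.filter (fun ρ => ρ.card = j ∧ ∃ σ ∈ F, ρ ⊆ σ)

lemma mem_ridgeSet {F : Finset (Finset V)} {j : ℕ} {ρ : Finset V} :
    ρ ∈ ridgeSet F j ↔ ρ.card = j ∧ ∃ σ ∈ F, ρ ⊆ σ := by
  simp [ridgeSet]

/-- The link of `F` at vertex `x`. -/
def linkF (F : Finset (Finset V)) (x : V) : Finset (Finset V) :=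
  (F.filter (fun σ => x ∈ σ)).image (fun σ => σ.erase x)

lemma mem_linkF {F : Finset (Finset V)} {x : V} {σ' : Finset V} :
    σ' ∈ linkF F x ↔ ∃ σ ∈ F, x ∈ σ ∧ σ.erase x = σ' := by
  simp [linkF, and_assoc]

lemma linkF_card (F : Finset (Finset V)) (x : V) :
    (linkF F x).card = (F.filter (fun σ => x ∈ σ)).card := by
  apply Finset.card_image_of_injOn
  intro σ hσ τ hτ he
  simp only [Finset.coe_filter, Set.mem_setOf_eq] at hσ hτ
  have := congrArg (insert x) he
  rwa [Finset.insert_erase hσ.2, Finset.insert_erase hτ.2] at this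

lemma sum_filter_card (F : Finset (Finset V)) :
    ∑ x : V, (F.filter (fun σ => x ∈ σ)).card = ∑ σ ∈ F, σ.card := by
  simp only [Finset.card_filter]
  rw [Finset.sum_comm]
  apply Finset.sum_congr rfl
  intro σ _
  rw [Finset.sum_ite_mem, Finset.univ_inter, Finset.card_eq_sum_ones]

lemma link_ridge_card (F : Finset (Finset V)) (x : V) (j : ℕ) :
    (ridgeSet (linkF F x) j).card = ((ridgeSet F (j+1)).filter (fun ρ => x ∈ ρ)).card := by
  apply Finset.card_bij (fun ρ' _ => insert x ρ')
  · intro ρ' hρ'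
    rw [mem_ridgeSet] at hρ'
    obtain ⟨hcard, σ', hσ', hsub⟩ := hρ'
    rw [mem_linkF] at hσ'
    obtain ⟨σ, hσ, hxσ, rfl⟩ := hσ'
    have hxρ' : x ∉ ρ' := fun hx => (Finset.mem_erase.mp (hsub hx)).1 rfl
    rw [Finset.mem_filter, mem_ridgeSet]
    refine ⟨⟨by rw [Finset.card_insert_of_notMem hxρ', hcard], σ, hσ, ?_⟩,
      Finset.mem_insert_self x ρ'⟩
    intro y hy
    rcases Finset.mem_insert.mp hy with rfl | hy
    · exact hxσ
    · exact Finset.mem_of_mem_erase (hsub hy)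
  · intro ρ₁ hρ₁ ρ₂ hρ₂ he
    have h1 : x ∉ ρ₁ := by
      rw [mem_ridgeSet] at hρ₁
      obtain ⟨_, σ', hσ', hsub⟩ := hρ₁
      rw [mem_linkF] at hσ'
      obtain ⟨σ, _, _, rfl⟩ := hσ'
      exact fun hx => (Finset.mem_erase.mp (hsub hx)).1 rfl
    have h2 : x ∉ ρ₂ := by
      rw [mem_ridgeSet] at hρ₂
      obtain ⟨_, σ', hσ', hsub⟩ := hρ₂
      rw [mem_linkF] at hσ'
      obtain ⟨σ, _, _, rfl⟩ := hσ'
      exact fun hx => (Finset.mem_erase.mp (hsub hx)).1 rfl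
    have := congrArg (fun s => Finset.erase s x) he
    simpa [Finset.erase_insert_of_ne, Finset.erase_insert h1, Finset.erase_insert h2] using this
  · intro ρ hρ
    rw [Finset.mem_filter, mem_ridgeSet] at hρ
    obtain ⟨⟨hcard, σ, hσ, hsub⟩, hxρ⟩ := hρ
    refine ⟨ρ.erase x, ?_, by rw [Finset.insert_erase hxρ]⟩
    rw [mem_ridgeSet]
    have hxσ : x ∈ σ := hsub hxρ
    refine ⟨by rw [Finset.card_erase_of_mem hxρ, hcard]; rfl, σ.erase x, ?_, ?_⟩
    · rw [mem_linkF]; exact ⟨σ, hσ, hxσ, rfl⟩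
    · exact Finset.erase_subset_erase x hsub

lemma sum_ridge_filter (F : Finset (Finset V)) (j : ℕ) :
    ∑ x : V, ((ridgeSet F j).filter (fun ρ => x ∈ ρ)).card
      = j * (ridgeSet F j).card := by
  rw [sum_filter_card (ridgeSet F j)]
  rw [Finset.sum_congr rfl (fun ρ hρ => (mem_ridgeSet.mp hρ).1)]
  simp [mul_comm]

end Ridges
section ConeTheorem
open Finset
set_option linter.unusedSectionVars false

universe u

/-- The cone-thrackle statement for facets of size `k`. -/
def ConeProp (k : ℕ) : Prop :=
  ∀ (E : Type) [AddCommGroup E] [Module ℝ E] (V : Type u) [Fintype V] [DecidableEq V]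
    (F : Finset (Finset V)) (g : V → E),
    (∀ σ ∈ F, σ.card = k) →
    (∀ σ ∈ F, LinearIndependent ℝ (fun v : σ => g v)) →
    (∀ σ ∈ F, ∀ τ ∈ F, σ ≠ τ →
      (∃ y, y ∈ coneOf g σ ∩ coneOf g τ ∧ y ≠ 0) ∧
      Module.finrank ℝ (Submodule.span ℝ (coneOf g σ ∩ coneOf g τ)) = k - 1) →
    k * F.card ≤ 2 * (ridgeSet F (k-1)).card

variable {E : Type} [AddCommGroup E] [Module ℝ E] {V : Type u} [Fintype V] [DecidableEq V]

lemma coneOf_erase_of_zero {g : V → E} {σ : Finset V} {x : V} (hx : x ∈ σ) (h0 : g x = 0) :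
    coneOf g σ = coneOf g (σ.erase x) := by
  ext y
  constructor
  · rintro ⟨c, hc, rfl⟩
    refine ⟨c, hc, ?_⟩
    rw [← Finset.sum_erase_add σ _ hx, h0, smul_zero, add_zero]
  · rintro ⟨c, hc, rfl⟩
    refine ⟨c, hc, ?_⟩
    rw [← Finset.sum_erase_add σ _ hx, h0, smul_zero, add_zero]

lemma quotient_linIndep {g : V → E} {σ : Finset V}
    (hind : LinearIndependent ℝ (fun v : σ => g v)) {x : V} (hx : x ∈ σ) :
    LinearIndependent ℝ (fun v : (σ.erase x) => (Submodule.span ℝ {g x}).mkQ (g v)) := by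
  rw [Fintype.linearIndependent_iff]
  intro c hc
  classical
  set c' : V → ℝ := fun v => if h : v ∈ σ.erase x then c ⟨v, h⟩ else 0 with hc'def
  have hc'eq : ∀ (v) (h : v ∈ σ.erase x), c' v = c ⟨v, h⟩ := by
    intro v h; rw [hc'def]; exact dif_pos h
  have hmem : ∑ v ∈ σ.erase x, c' v • g v ∈ Submodule.span ℝ {g x} := by
    rw [← Submodule.Quotient.mk_eq_zero, ← Submodule.mkQ_apply, map_sum]
    simp only [map_smul]
    rw [← hc, ← Finset.sum_coe_sort (σ.erase x)
      (fun v => c' v • (Submodule.span ℝ {g x}).mkQ (g v))]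
    apply Finset.sum_congr rfl
    rintro ⟨v, hv⟩ _
    rw [hc'eq v hv]
  obtain ⟨r, hr⟩ := Submodule.mem_span_singleton.mp hmem
  set d : V → ℝ := fun v => if v = x then -r else c' v with hd_def
  have hsum : ∑ v ∈ σ, d v • g v = 0 := by
    rw [← Finset.sum_erase_add σ _ hx]
    have h1 : ∀ v ∈ σ.erase x, d v • g v = c' v • g v := by
      intro v hv
      have hne : v ≠ x := (Finset.mem_erase.mp hv).1
      rw [hd_def]; dsimp only; rw [if_neg hne]
    rw [Finset.sum_congr rfl h1, ← hr]
    rw [hd_def]; dsimp only; rw [if_pos rfl]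
    rw [neg_smul, add_neg_cancel]
  have hall := coeff_eq_zero hind hsum
  rintro ⟨v, hv⟩
  have hne : v ≠ x := (Finset.mem_erase.mp hv).1
  have hd0 : d v = 0 := hall v (Finset.mem_of_mem_erase hv)
  rw [hd_def] at hd0; dsimp only at hd0; rw [if_neg hne] at hd0
  rw [← hc'eq v hv]; exact hd0

lemma cone_inter_image {g : V → E} {σ τ : Finset V} {x : V} (hxσ : x ∈ σ) (hxτ : x ∈ τ) :
    ((Submodule.span ℝ {g x}).mkQ '' coneOf g σ) ∩ ((Submodule.span ℝ {g x}).mkQ '' coneOf g τ)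
      = (Submodule.span ℝ {g x}).mkQ '' (coneOf g σ ∩ coneOf g τ) := by
  set p := Submodule.span ℝ {g x}
  apply Set.Subset.antisymm
  · rintro yq ⟨⟨y₁, hy₁, rfl⟩, ⟨y₂, hy₂, hy₁₂⟩⟩
    have hker : y₂ - y₁ ∈ p := by
      rw [← Submodule.Quotient.mk_eq_zero, Submodule.Quotient.mk_sub]
      rw [← Submodule.mkQ_apply, ← Submodule.mkQ_apply, hy₁₂, sub_self]
    obtain ⟨r, hr⟩ := Submodule.mem_span_singleton.mp hker
    rcases le_or_gt 0 r with h | h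
    · refine ⟨y₂, ⟨?_, hy₂⟩, by rw [hy₁₂]⟩
      have he : y₂ = y₁ + r • g x := by rw [hr]; abel
      rw [he]
      exact add_gen_mem_coneOf hxσ h hy₁
    · refine ⟨y₁, ⟨hy₁, ?_⟩, rfl⟩
      have he : y₁ = y₂ + (-r) • g x := by
        rw [neg_smul, hr]; abel
      rw [he]
      exact add_gen_mem_coneOf hxτ (by linarith) hy₂
  · rintro yq ⟨y, ⟨h1, h2⟩, rfl⟩
    exact ⟨⟨y, h1, rfl⟩, ⟨y, h2, rfl⟩⟩

lemma cone_step (k : ℕ) (hk : 2 ≤ k) (ih : ConeProp.{u} k) : ConeProp.{u} (k+1) := by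
  intro E _ _ V _ _ F g hF hind hint
  have hkpos : 0 < k := by omega
  have key : ∀ x : V, k * (linkF F x).card ≤ 2 * (ridgeSet (linkF F x) (k-1)).card := by
    intro x
    set p : Submodule ℝ E := Submodule.span ℝ {g x} with hp_def
    apply ih (E ⧸ p) V (linkF F x) (p.mkQ ∘ g)
    · -- cards
      intro σ' hσ'
      obtain ⟨σ, hσ, hxσ, rfl⟩ := mem_linkF.mp hσ'
      rw [Finset.card_erase_of_mem hxσ, hF σ hσ]
      rfl
    · -- linear independence
      intro σ' hσ'
      obtain ⟨σ, hσ, hxσ, rfl⟩ := mem_linkF.mp hσ'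
      exact quotient_linIndep (hind σ hσ) hxσ
    · -- intersections
      intro σ' hσ' τ' hτ' hne
      obtain ⟨σ, hσ, hxσ, rfl⟩ := mem_linkF.mp hσ'
      obtain ⟨τ, hτ, hxτ, rfl⟩ := mem_linkF.mp hτ'
      have hστ : σ ≠ τ := fun h => hne (by rw [h])
      obtain ⟨⟨y₀, hy₀, hy₀ne⟩, hrank⟩ := hint σ hσ τ hτ hστ
      have hzero : (p.mkQ ∘ g) x = 0 := by
        simp only [Function.comp_apply, Submodule.mkQ_apply, Submodule.Quotient.mk_eq_zero]
        exact Submodule.mem_span_singleton_self _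
      have hconeσ : coneOf (p.mkQ ∘ g) (σ.erase x) = p.mkQ '' coneOf g σ := by
        rw [← coneOf_erase_of_zero hxσ hzero, ← coneOf_map]
      have hconeτ : coneOf (p.mkQ ∘ g) (τ.erase x) = p.mkQ '' coneOf g τ := by
        rw [← coneOf_erase_of_zero hxτ hzero, ← coneOf_map]
      set K : Set E := coneOf g σ ∩ coneOf g τ with hK_def
      have hinter : coneOf (p.mkQ ∘ g) (σ.erase x) ∩ coneOf (p.mkQ ∘ g) (τ.erase x)
          = p.mkQ '' K := by
        rw [hconeσ, hconeτ]
        exact cone_inter_image hxσ hxτ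
      have hgxK : g x ∈ K := ⟨gen_mem_coneOf g hxσ, gen_mem_coneOf g hxτ⟩
      have hgxne : g x ≠ 0 := gen_ne_zero (hind σ hσ) hxσ
      have hKspan : Submodule.span ℝ K ≤ Submodule.span ℝ (g '' σ) :=
        Submodule.span_le.mpr (fun y hy => coneOf_subset_span g σ hy.1)
      haveI : FiniteDimensional ℝ (Submodule.span ℝ (g '' (σ : Set V))) :=
        FiniteDimensional.span_of_finite ℝ (σ.finite_toSet.image g)
      haveI : FiniteDimensional ℝ (Submodule.span ℝ K) :=
        Submodule.finiteDimensional_of_le hKspan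
      have hple : p ≤ Submodule.span ℝ K :=
        Submodule.span_le.mpr (by simpa using Submodule.subset_span hgxK)
      have hrankK : Module.finrank ℝ (Submodule.span ℝ K) = k := by
        simpa using hrank
      constructor
      · -- a nonzero common point in the quotient
        have hex : ∃ y ∈ K, y ∉ p := by
          by_contra hcon
          push_neg at hcon
          have hle : Submodule.span ℝ K ≤ p := Submodule.span_le.mpr hcon
          have heq : Submodule.span ℝ K = p := le_antisymm hle hple
          rw [heq, hp_def, finrank_span_singleton hgxne] at hrankK
          omega
        obtain ⟨y, hyK, hyp⟩ := hex
        refine ⟨p.mkQ y, ?_, ?_⟩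
        · rw [hinter]; exact ⟨y, hyK, rfl⟩
        · rw [Submodule.mkQ_apply, ne_eq, Submodule.Quotient.mk_eq_zero]
          exact hyp
      · -- the rank of the intersection in the quotient
        rw [hinter, Submodule.span_image]
        set φ := p.mkQ.domRestrict (Submodule.span ℝ K) with hφ_def
        have hrn := LinearMap.finrank_range_add_finrank_ker φ
        have hrange : LinearMap.range φ = (Submodule.span ℝ K).map p.mkQ :=
          LinearMap.range_domRestrict _ _
        have hker : LinearMap.ker φ = Submodule.comap (Submodule.span ℝ K).subtype p := by
          ext y
          simp [hφ_def, LinearMap.mem_ker, LinearMap.domRestrict_apply,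
            Submodule.mkQ_apply, Submodule.Quotient.mk_eq_zero, Submodule.mem_comap]
        have hkerrank : Module.finrank ℝ (LinearMap.ker φ) = 1 := by
          rw [hker, (Submodule.comapSubtypeEquivOfLe hple).finrank_eq]
          exact finrank_span_singleton hgxne
        rw [hrange, hkerrank, hrankK] at hrn
        omega
  -- summation
  have h1 : ∑ x : V, (linkF F x).card = (k+1) * F.card := by
    rw [Finset.sum_congr rfl (fun x _ => linkF_card F x), sum_filter_card,
      Finset.sum_congr rfl hF]
    rw [Finset.sum_const, smul_eq_mul, mul_comm]
  have h2 : ∑ x : V, (ridgeSet (linkF F x) (k-1)).card = k * (ridgeSet F k).card := by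
    have hx : ∀ x : V, (ridgeSet (linkF F x) (k-1)).card
        = ((ridgeSet F k).filter (fun ρ => x ∈ ρ)).card := by
      intro x
      have := link_ridge_card F x (k-1)
      rwa [Nat.sub_add_cancel (by omega : 1 ≤ k)] at this
    rw [Finset.sum_congr rfl (fun x _ => hx x), sum_ridge_filter]
  have hsum := Finset.sum_le_sum (fun x (_ : x ∈ Finset.univ) => key x)
  rw [← Finset.mul_sum, ← Finset.mul_sum, h1, h2, mul_left_comm 2 k ((ridgeSet F k).card)] at hsum
  have := Nat.le_of_mul_le_mul_left hsum hkpos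
  simpa using this

end ConeTheorem
section BaseHelpers
open Finset
set_option linter.unusedSectionVars false

universe u

variable {E : Type} [AddCommGroup E] [Module ℝ E] {V : Type u} [Fintype V] [DecidableEq V]

lemma add_mem_coneOf {g : V → E} {σ : Finset V} {y z : E}
    (hy : y ∈ coneOf g σ) (hz : z ∈ coneOf g σ) : y + z ∈ coneOf g σ := by
  obtain ⟨c₁, hc₁, rfl⟩ := hy
  obtain ⟨c₂, hc₂, rfl⟩ := hz
  refine ⟨fun v => c₁ v + c₂ v, fun v => ?_, ?_⟩
  · have h1 := hc₁ v; have h2 := hc₂ v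
    dsimp only
    linarith
  rw [← Finset.sum_add_distrib]
  apply Finset.sum_congr rfl
  intro v _
  rw [add_smul]

lemma coneOf_pair {g : V → E} {a b : V} (hab : a ≠ b) {y : E} :
    y ∈ coneOf g (insert a {b}) ↔ ∃ s t : ℝ, 0 ≤ s ∧ 0 ≤ t ∧ y = s • g a + t • g b := by
  constructor
  · rintro ⟨c, hc, rfl⟩
    exact ⟨c a, c b, hc a, hc b, by
      rw [Finset.sum_insert (by simp [hab]), Finset.sum_singleton]⟩
  · rintro ⟨s, t, hs, ht, rfl⟩
    exact add_mem_coneOf (smul_mem_coneOf hs (gen_mem_coneOf g (Finset.mem_insert_self a _)))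
      (smul_mem_coneOf ht (gen_mem_coneOf g (by simp)))

lemma pair_indep {g : V → E} {σ : Finset V}
    (hind : LinearIndependent ℝ (fun v : σ => g v)) {a b : V} (ha : a ∈ σ) (hb : b ∈ σ)
    (hab : a ≠ b) {s t : ℝ} (h : s • g a + t • g b = 0) : s = 0 ∧ t = 0 := by
  classical
  set c : V → ℝ := fun v => if v = a then s else if v = b then t else 0 with hc
  have hsub : insert a {b} ⊆ σ := Finset.insert_subset ha (Finset.singleton_subset_iff.mpr hb)
  have hsum : ∑ v ∈ σ, c v • g v = 0 := by
    rw [← Finset.sum_subset hsub ?_]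
    · rw [Finset.sum_insert (by simp [hab]), Finset.sum_singleton]
      have hca : c a = s := by rw [hc]; simp
      have hcb : c b = t := by rw [hc]; simp [Ne.symm hab]
      rw [hca, hcb, h]
    · intro v _ hv
      have hva : v ≠ a := fun h' => hv (by rw [h']; exact Finset.mem_insert_self a _)
      have hvb : v ≠ b := fun h' => hv (by rw [h']; simp)
      rw [hc]; simp [hva, hvb]
  have hz := coeff_eq_zero hind hsum
  constructor
  · have := hz a ha; rw [hc] at this; simpa using this
  · have := hz b hb; rw [hc] at this; simpa [Ne.symm hab] using this

lemma inter_ray_of_shared {g : V → E} {σ τ : Finset V}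
    (hindσ : LinearIndependent ℝ (fun v : σ => g v)) {w : V} (hwσ : w ∈ σ)
    (hrank : Module.finrank ℝ (Submodule.span ℝ (coneOf g σ ∩ coneOf g τ)) = 1)
    (hwK : g w ∈ coneOf g σ ∩ coneOf g τ) :
    ∀ y ∈ coneOf g σ ∩ coneOf g τ, ∃ r : ℝ, y = r • g w := by
  set K := coneOf g σ ∩ coneOf g τ with hK
  haveI : FiniteDimensional ℝ (Submodule.span ℝ (g '' (σ : Set V))) :=
    FiniteDimensional.span_of_finite ℝ (σ.finite_toSet.image g)
  haveI : FiniteDimensional ℝ (Submodule.span ℝ K) :=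
    Submodule.finiteDimensional_of_le
      (Submodule.span_le.mpr fun y hy => coneOf_subset_span g σ hy.1)
  have hgw : g w ≠ 0 := gen_ne_zero hindσ hwσ
  have hle : Submodule.span ℝ {g w} ≤ Submodule.span ℝ K :=
    Submodule.span_le.mpr (by simpa using Submodule.subset_span hwK)
  have heq : Submodule.span ℝ {g w} = Submodule.span ℝ K :=
    Submodule.eq_of_le_of_finrank_le hle
      (by rw [hrank, finrank_span_singleton hgw])
  intro y hy
  have hy' : y ∈ Submodule.span ℝ {g w} := by
    rw [heq]; exact Submodule.subset_span hy
  obtain ⟨r, hr⟩ := Submodule.mem_span_singleton.mp hy'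
  exact ⟨r, hr.symm⟩

end BaseHelpers
section BaseCase
open Finset
set_option linter.unusedSectionVars false
set_option maxHeartbeats 1000000

universe u

variable {E : Type} [AddCommGroup E] [Module ℝ E] {V : Type u} [Fintype V] [DecidableEq V]

/-- The key geometric fact: at a vertex `x` of degree ≥ 3, it cannot be that three
pages `{x,aᵢ}` all have "doors" (other facets `τᵢ` through `aᵢ`). -/
lemma three_doors_contra {g : V → E} {F : Finset (Finset V)}
    (hF : ∀ σ ∈ F, σ.card = 2)
    (hind : ∀ σ ∈ F, LinearIndependent ℝ (fun v : σ => g v))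
    (hint : ∀ σ ∈ F, ∀ τ ∈ F, σ ≠ τ →
      (∃ y, y ∈ coneOf g σ ∩ coneOf g τ ∧ y ≠ 0) ∧
      Module.finrank ℝ (Submodule.span ℝ (coneOf g σ ∩ coneOf g τ)) = 1)
    {x : V} {a₁ a₂ a₃ : V}
    (ha₁ : a₁ ≠ x) (ha₂ : a₂ ≠ x) (ha₃ : a₃ ≠ x)
    (hne₁₂ : a₁ ≠ a₂) (hne₁₃ : a₁ ≠ a₃) (hne₂₃ : a₂ ≠ a₃)
    (hσ₁ : insert x {a₁} ∈ F) (hσ₂ : insert x {a₂} ∈ F) (hσ₃ : insert x {a₃} ∈ F)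
    {τ₁ τ₂ τ₃ : Finset V}
    (hτ₁ : τ₁ ∈ F) (hτ₂ : τ₂ ∈ F) (hτ₃ : τ₃ ∈ F)
    (ha₁τ : a₁ ∈ τ₁) (ha₂τ : a₂ ∈ τ₂) (ha₃τ : a₃ ∈ τ₃)
    (hτσ₁ : τ₁ ≠ insert x {a₁}) (hτσ₂ : τ₂ ≠ insert x {a₂}) (hτσ₃ : τ₃ ≠ insert x {a₃}) :
    False := by
  classical
  set p : Submodule ℝ E := Submodule.span ℝ {g x} with hp
  set π := p.mkQ with hπ
  have hπx : π (g x) = 0 := by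
    rw [hπ, Submodule.mkQ_apply, Submodule.Quotient.mk_eq_zero, hp]
    exact Submodule.mem_span_singleton_self _
  have hxmemσ : ∀ a : V, x ∈ (insert x {a} : Finset V) := fun a => Finset.mem_insert_self x _
  have hamemσ : ∀ a : V, a ∈ (insert x {a} : Finset V) := fun a => by simp
  have hpage_ne : ∀ {a a' : V}, a ≠ x → a ≠ a' → (insert x {a} : Finset V) ≠ insert x {a'} := by
    intro a a' hax haa' h
    have hmem : a ∈ (insert x {a'} : Finset V) := by rw [← h]; simp
    rcases Finset.mem_insert.mp hmem with h' | h'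
    · exact hax h'
    · exact haa' (by simpa using h')
  -- doors avoid x
  have hxτ : ∀ {a : V} {τ : Finset V}, τ ∈ F → a ∈ τ → a ≠ x → τ ≠ insert x {a} → x ∉ τ := by
    intro a τ hτF haτ hax hτσ hxmem
    apply hτσ
    have hsub : (insert x {a} : Finset V) ⊆ τ :=
      Finset.insert_subset hxmem (Finset.singleton_subset_iff.mpr haτ)
    have hcard : (insert x {a} : Finset V).card = 2 := by
      rw [Finset.card_insert_of_notMem (by simp [Ne.symm hax]), Finset.card_singleton]
    exact (Finset.eq_of_subset_of_card_le hsub (by rw [hF τ hτF, hcard])).symm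
  -- doors have a second vertex
  have hτform : ∀ {a : V} {τ : Finset V}, τ ∈ F → a ∈ τ → ∃ b : V, b ≠ a ∧ τ = insert a {b} := by
    intro a τ hτF haτ
    have hc : (τ.erase a).card = 1 := by rw [Finset.card_erase_of_mem haτ, hF τ hτF]
    obtain ⟨b, hb⟩ := Finset.card_eq_one.mp hc
    refine ⟨b, ?_, ?_⟩
    · have hbmem : b ∈ τ.erase a := by rw [hb]; simp
      exact (Finset.mem_erase.mp hbmem).1
    · rw [← Finset.insert_erase haτ, hb]
  -- quotient images of page generators are nonzero
  have hu_ne : ∀ {a : V}, a ≠ x → (insert x {a} : Finset V) ∈ F → π (g a) ≠ 0 := by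
    intro a hax hσF h0
    rw [hπ, Submodule.mkQ_apply, Submodule.Quotient.mk_eq_zero, hp] at h0
    obtain ⟨r, hr⟩ := Submodule.mem_span_singleton.mp h0
    have heq : (1:ℝ) • g a + (-r) • g x = 0 := by
      linear_combination (norm := module) (-1 : ℝ) • hr
    exact one_ne_zero (pair_indep (hind _ hσF) (hamemσ a) (hxmemσ a) hax heq).1
  -- `g x` is not in any door's cone
  have hgx_notin : ∀ {a : V} {τ : Finset V}, a ≠ x → (insert x {a} : Finset V) ∈ F → τ ∈ F →
      a ∈ τ → τ ≠ insert x {a} → g x ∉ coneOf g τ := by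
    intro a τ hax hσF hτF haτ hτσ hgxτ
    have hne : (insert x {a} : Finset V) ≠ τ := fun h => hτσ h.symm
    have hKrank := (hint _ hσF τ hτF hne).2
    have hgaK : g a ∈ coneOf g (insert x {a}) ∩ coneOf g τ :=
      ⟨gen_mem_coneOf g (hamemσ a), gen_mem_coneOf g haτ⟩
    have hray := inter_ray_of_shared (hind _ hσF) (hamemσ a) hKrank hgaK
    obtain ⟨r, hr⟩ := hray (g x) ⟨gen_mem_coneOf g (hxmemσ a), hgxτ⟩
    have heq : (1:ℝ) • g x + (-r) • g a = 0 := by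
      linear_combination (norm := module) hr
    exact one_ne_zero (pair_indep (hind _ hσF) (hxmemσ a) (hamemσ a) (Ne.symm hax) heq).1
  -- two pages only meet along the ray of g x
  have N2 : ∀ {a a' : V}, a ≠ x → a' ≠ x → a ≠ a' →
      (insert x {a} : Finset V) ∈ F → (insert x {a'} : Finset V) ∈ F →
      ∀ s t : ℝ, 0 ≤ s → 0 ≤ t → s • π (g a) = t • π (g a') → s • π (g a) = 0 := by
    intro a a' hax ha'x haa' hσF hσ'F s t hs ht hst
    have hne := hpage_ne hax haa'
    have hKrank := (hint _ hσF _ hσ'F hne).2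
    have hgxK : g x ∈ coneOf g (insert x {a}) ∩ coneOf g (insert x {a'}) :=
      ⟨gen_mem_coneOf g (hxmemσ a), gen_mem_coneOf g (hxmemσ a')⟩
    have hray := inter_ray_of_shared (hind _ hσF) (hxmemσ a) hKrank hgxK
    have hker : s • g a - t • g a' ∈ p := by
      rw [← Submodule.Quotient.mk_eq_zero]
      have hπ0 : π (s • g a - t • g a') = 0 := by
        rw [map_sub, map_smul, map_smul, hst, sub_self]
      rwa [hπ, Submodule.mkQ_apply] at hπ0
    rw [hp] at hker
    obtain ⟨r, hr⟩ := Submodule.mem_span_singleton.mp hker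
    rcases le_or_gt 0 r with h | h
    · have hy₂ : s • g a = r • g x + t • g a' := by
        linear_combination (norm := module) (-1 : ℝ) • hr
      have hyK : s • g a ∈ coneOf g (insert x {a}) ∩ coneOf g (insert x {a'}) := by
        refine ⟨smul_mem_coneOf hs (gen_mem_coneOf g (hamemσ a)), ?_⟩
        rw [hy₂]
        exact (coneOf_pair (Ne.symm ha'x)).mpr ⟨r, t, h, ht, rfl⟩
      obtain ⟨r', hr'⟩ := hray _ hyK
      have hfin : π (s • g a) = 0 := by
        rw [hr', map_smul, hπx, smul_zero]
      rw [← map_smul]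
      exact hfin
    · have hy₂ : s • g a + (-r) • g x = t • g a' := by
        linear_combination (norm := module) (-1 : ℝ) • hr
      have hyK : s • g a + (-r) • g x ∈ coneOf g (insert x {a}) ∩ coneOf g (insert x {a'}) := by
        constructor
        · rw [add_comm]
          exact (coneOf_pair (Ne.symm hax)).mpr ⟨-r, s, by linarith, hs, rfl⟩
        · rw [hy₂]
          exact smul_mem_coneOf ht (gen_mem_coneOf g (hamemσ a'))
      obtain ⟨r', hr'⟩ := hray _ hyK
      have hfin : s • π (g a) = π (s • g a + (-r) • g x) := by
        rw [map_add, map_smul, map_smul, hπx, smul_zero, add_zero]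
      rw [hfin, hr', map_smul, hπx, smul_zero]
  -- strict version
  have hstrict : ∀ {a a' : V}, a ≠ x → a' ≠ x → a ≠ a' →
      (insert x {a} : Finset V) ∈ F → (insert x {a'} : Finset V) ∈ F →
      ∀ t : ℝ, 0 ≤ t → π (g a) = t • π (g a') → False := by
    intro a a' hax ha'x haa' hσ hσ' t ht heq
    have h1 := N2 hax ha'x haa' hσ hσ' 1 t zero_le_one ht (by rw [one_smul]; exact heq)
    rw [one_smul] at h1
    exact hu_ne hax hσ h1
  -- each door's quotient cone contains every other page direction
  have N3 : ∀ {a a' : V} {τ : Finset V}, a ≠ x → a' ≠ x →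
      (insert x {a} : Finset V) ∈ F → (insert x {a'} : Finset V) ∈ F → τ ∈ F →
      a ∈ τ → τ ≠ insert x {a} → x ∉ τ → π (g a') ∈ coneOf (π ∘ g) τ := by
    intro a a' τ hax ha'x hσF hσ'F hτF haτ hτσ hxτm
    have hneτσ' : τ ≠ insert x {a'} := fun h => hxτm (h ▸ hxmemσ a')
    obtain ⟨⟨y, ⟨hyτ, hyσ'⟩, hyne⟩, _⟩ := hint τ hτF _ hσ'F hneτσ'
    obtain ⟨s, t, hs, ht, hy_eq⟩ := (coneOf_pair (Ne.symm ha'x)).mp hyσ'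
    rcases eq_or_lt_of_le ht with ht0 | htpos
    · exfalso
      have hy' : y = s • g x := by rw [hy_eq, ← ht0, zero_smul, add_zero]
      have hsne : s ≠ 0 := by
        intro h0; exact hyne (by rw [hy', h0, zero_smul])
      have hgxeq : g x = s⁻¹ • y := by
        rw [hy', smul_smul, inv_mul_cancel₀ hsne, one_smul]
      have : g x ∈ coneOf g τ := by
        rw [hgxeq]
        exact smul_mem_coneOf (inv_nonneg.mpr hs) hyτ
      exact hgx_notin hax hσF hτF haτ hτσ this
    · have hπy : π y ∈ coneOf (π ∘ g) τ := by
        rw [← coneOf_map]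
        exact ⟨y, hyτ, rfl⟩
      have hπy_eq : π y = t • π (g a') := by
        rw [hy_eq, map_add, map_smul, map_smul, hπx, smul_zero, zero_add]
      have : π (g a') = t⁻¹ • π y := by
        rw [hπy_eq, smul_smul, inv_mul_cancel₀ (ne_of_gt htpos), one_smul]
      rw [this]
      exact smul_mem_coneOf (inv_nonneg.mpr (le_of_lt htpos)) hπy
  -- set up door data
  obtain ⟨b₁, hb₁ne, hτ₁f⟩ := hτform hτ₁ ha₁τ
  obtain ⟨b₂, hb₂ne, hτ₂f⟩ := hτform hτ₂ ha₂τ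
  obtain ⟨b₃, hb₃ne, hτ₃f⟩ := hτform hτ₃ ha₃τ
  have hxτ₁ : x ∉ τ₁ := hxτ hτ₁ ha₁τ ha₁ hτσ₁
  have hxτ₂ : x ∉ τ₂ := hxτ hτ₂ ha₂τ ha₂ hτσ₂
  have hxτ₃ : x ∉ τ₃ := hxτ hτ₃ ha₃τ ha₃ hτσ₃
  -- memberships
  have h11 : π (g a₁) ∈ coneOf (π ∘ g) τ₁ := gen_mem_coneOf (π ∘ g) ha₁τ
  have h21 : π (g a₂) ∈ coneOf (π ∘ g) τ₁ := N3 ha₁ ha₂ hσ₁ hσ₂ hτ₁ ha₁τ hτσ₁ hxτ₁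
  have h31 : π (g a₃) ∈ coneOf (π ∘ g) τ₁ := N3 ha₁ ha₃ hσ₁ hσ₃ hτ₁ ha₁τ hτσ₁ hxτ₁
  have h12 : π (g a₁) ∈ coneOf (π ∘ g) τ₂ := N3 ha₂ ha₁ hσ₂ hσ₁ hτ₂ ha₂τ hτσ₂ hxτ₂
  have h32 : π (g a₃) ∈ coneOf (π ∘ g) τ₂ := N3 ha₂ ha₃ hσ₂ hσ₃ hτ₂ ha₂τ hτσ₂ hxτ₂
  have h13 : π (g a₁) ∈ coneOf (π ∘ g) τ₃ := N3 ha₃ ha₁ hσ₃ hσ₁ hτ₃ ha₃τ hτσ₃ hxτ₃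
  have h23 : π (g a₂) ∈ coneOf (π ∘ g) τ₃ := N3 ha₃ ha₂ hσ₃ hσ₂ hτ₃ ha₃τ hτσ₃ hxτ₃
  -- decompose in the pair cones
  rw [hτ₁f] at h21 h31
  rw [hτ₂f] at h12 h32
  rw [hτ₃f] at h13 h23
  obtain ⟨p₂, q₂, hp₂, hq₂, hu₂⟩ := (coneOf_pair (Ne.symm hb₁ne)).mp h21
  obtain ⟨p₃, q₃, hp₃, hq₃, hu₃⟩ := (coneOf_pair (Ne.symm hb₁ne)).mp h31
  obtain ⟨sa, sb, hsa, hsb, he1⟩ := (coneOf_pair (Ne.symm hb₂ne)).mp h12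
  obtain ⟨sa', sb', hsa', hsb', he2⟩ := (coneOf_pair (Ne.symm hb₂ne)).mp h32
  obtain ⟨c₀, e₀, hc₀, he₀, he3⟩ := (coneOf_pair (Ne.symm hb₃ne)).mp h13
  obtain ⟨cc, ee, hcc, hee, he4⟩ := (coneOf_pair (Ne.symm hb₃ne)).mp h23
  simp only [Function.comp_apply] at hu₂ hu₃ he1 he2 he3 he4
  -- strict positivity of the "z"-coefficients
  have hq₂pos : 0 < q₂ := by
    rcases eq_or_lt_of_le hq₂ with h0 | h
    · exact (hstrict ha₂ ha₁ (Ne.symm hne₁₂) hσ₂ hσ₁ p₂ hp₂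
        (by rw [hu₂, ← h0, zero_smul, add_zero])).elim
    · exact h
  have hq₃pos : 0 < q₃ := by
    rcases eq_or_lt_of_le hq₃ with h0 | h
    · exact (hstrict ha₃ ha₁ (Ne.symm hne₁₃) hσ₃ hσ₁ p₃ hp₃
        (by rw [hu₃, ← h0, zero_smul, add_zero])).elim
    · exact h
  have hsbpos : 0 < sb := by
    rcases eq_or_lt_of_le hsb with h0 | h
    · exact (hstrict ha₁ ha₂ hne₁₂ hσ₁ hσ₂ sa hsa
        (by rw [he1, ← h0, zero_smul, add_zero])).elim
    · exact h
  have hsb'pos : 0 < sb' := by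
    rcases eq_or_lt_of_le hsb' with h0 | h
    · exact (hstrict ha₃ ha₂ (Ne.symm hne₂₃) hσ₃ hσ₂ sa' hsa'
        (by rw [he2, ← h0, zero_smul, add_zero])).elim
    · exact h
  have he₀pos : 0 < e₀ := by
    rcases eq_or_lt_of_le he₀ with h0 | h
    · exact (hstrict ha₁ ha₃ hne₁₃ hσ₁ hσ₃ c₀ hc₀
        (by rw [he3, ← h0, zero_smul, add_zero])).elim
    · exact h
  have heepos : 0 < ee := by
    rcases eq_or_lt_of_le hee with h0 | h
    · exact (hstrict ha₂ ha₃ hne₂₃ hσ₂ hσ₃ cc hcc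
        (by rw [he4, ← h0, zero_smul, add_zero])).elim
    · exact h
  -- case split on degeneracy of z₁ over u₁
  by_cases hz : ∃ γ : ℝ, π (g b₁) = γ • π (g a₁)
  · obtain ⟨γ, hγ⟩ := hz
    have hμ₂ : π (g a₂) = (p₂ + q₂*γ) • π (g a₁) := by
      rw [hu₂, hγ]; module
    have hμ₃ : π (g a₃) = (p₃ + q₃*γ) • π (g a₁) := by
      rw [hu₃, hγ]; module
    have hμ₂ne : p₂ + q₂*γ ≠ 0 := by
      intro h0; rw [h0, zero_smul] at hμ₂
      exact hu_ne ha₂ hσ₂ hμ₂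
    have hμ₂neg : p₂ + q₂*γ < 0 := by
      rcases lt_or_ge (p₂ + q₂*γ) 0 with h | h
      · exact h
      · exact (hstrict ha₂ ha₁ (Ne.symm hne₁₂) hσ₂ hσ₁ _ h hμ₂).elim
    have hμ₃neg : p₃ + q₃*γ < 0 := by
      rcases lt_or_ge (p₃ + q₃*γ) 0 with h | h
      · exact h
      · exact (hstrict ha₃ ha₁ (Ne.symm hne₁₃) hσ₃ hσ₁ _ h hμ₃).elim
    have hratio : π (g a₃) = ((p₃ + q₃*γ)/(p₂ + q₂*γ)) • π (g a₂) := by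
      rw [hμ₃, hμ₂, smul_smul, div_mul_cancel₀ _ hμ₂ne]
    have hrationn : 0 ≤ (p₃ + q₃*γ)/(p₂ + q₂*γ) := by
      rw [div_nonneg_iff]
      right
      exact ⟨le_of_lt hμ₃neg, le_of_lt hμ₂neg⟩
    exact hstrict ha₃ ha₂ (Ne.symm hne₂₃) hσ₃ hσ₂ _ hrationn hratio
  · push_neg at hz
    have hindep : ∀ α β : ℝ, α • π (g a₁) = β • π (g b₁) → α = 0 ∧ β = 0 := by
      intro α β h
      by_cases hβ : β = 0
      · rw [hβ, zero_smul] at h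
        rcases smul_eq_zero.mp h with h' | h'
        · exact ⟨h', hβ⟩
        · exact absurd h' (hu_ne ha₁ hσ₁)
      · exfalso
        apply hz (α/β)
        have h' := congrArg (fun w => β⁻¹ • w) h
        simp only [smul_smul] at h'
        rw [inv_mul_cancel₀ hβ, one_smul] at h'
        rw [← h', div_eq_inv_mul]
    have hvec1 : (sb' - sb*p₃ - (sb'*sa - sb*sa')*p₂) • π (g a₁)
        = (sb*q₃ + (sb'*sa - sb*sa')*q₂) • π (g b₁) := by
      linear_combination (norm := module) sb' • he1 - sb • he2
        + (sb'*sa - sb*sa') • hu₂ + sb • hu₃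
    have hvec2 : (e₀*p₂ - ee - (e₀*cc - ee*c₀)*p₃) • π (g a₁)
        = ((e₀*cc - ee*c₀)*q₃ - e₀*q₂) • π (g b₁) := by
      linear_combination (norm := module) e₀ • he4 - ee • he3
        + (e₀*cc - ee*c₀) • hu₃ - e₀ • hu₂
    obtain ⟨hA, hB⟩ := hindep _ _ hvec1
    obtain ⟨hC, hD⟩ := hindep _ _ hvec2
    have hX : sb*(p₃*q₂ - q₃*p₂) = sb'*q₂ := by
      linear_combination (-q₂)*hA + (-p₂)*hB
    have hXpos : 0 < p₃*q₂ - q₃*p₂ := by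
      nlinarith [mul_pos hsb'pos hq₂pos, hsbpos]
    have hY : e₀*(p₂*q₃ - q₂*p₃) = ee*q₃ := by
      linear_combination q₃*hC + p₃*hD
    have hYpos : 0 < p₂*q₃ - q₂*p₃ := by
      nlinarith [mul_pos heepos hq₃pos, he₀pos]
    linarith

end BaseCase
section BaseInduction
open Finset
set_option linter.unusedSectionVars false
set_option maxHeartbeats 1000000

universe u

lemma cone_base_aux {E : Type} [AddCommGroup E] [Module ℝ E] {V : Type u} [Fintype V]
    [DecidableEq V] (g : V → E) :
    ∀ N : ℕ, ∀ F : Finset (Finset V), F.card ≤ N →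
    (∀ σ ∈ F, σ.card = 2) →
    (∀ σ ∈ F, LinearIndependent ℝ (fun v : σ => g v)) →
    (∀ σ ∈ F, ∀ τ ∈ F, σ ≠ τ →
      (∃ y, y ∈ coneOf g σ ∩ coneOf g τ ∧ y ≠ 0) ∧
      Module.finrank ℝ (Submodule.span ℝ (coneOf g σ ∩ coneOf g τ)) = 1) →
    F.card ≤ (ridgeSet F 1).card := by
  intro N
  induction N with
  | zero =>
    intro F hN _ _ _
    rw [Nat.le_zero, Finset.card_eq_zero] at hN
    subst hN
    simp
  | succ N ihN =>
    intro F hN hF hind hint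
    by_cases hdeg : ∀ x : V, (F.filter (fun σ => x ∈ σ)).card ≤ 2
    · -- counting case: all degrees at most 2
      set cov := Finset.univ.filter (fun x : V => ∃ σ ∈ F, x ∈ σ) with hcov
      have hridge : (ridgeSet F 1).card = cov.card := by
        symm
        apply Finset.card_bij (fun x _ => ({x} : Finset V))
        · intro x hx
          rw [hcov, Finset.mem_filter] at hx
          obtain ⟨σ, hσ, hxσ⟩ := hx.2
          rw [mem_ridgeSet]
          exact ⟨Finset.card_singleton x, σ, hσ, Finset.singleton_subset_iff.mpr hxσ⟩
        · intro x _ y _ h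
          exact Finset.singleton_injective h
        · intro ρ hρ
          rw [mem_ridgeSet] at hρ
          obtain ⟨hc, σ, hσ, hsub⟩ := hρ
          obtain ⟨a, rfl⟩ := Finset.card_eq_one.mp hc
          refine ⟨a, ?_, rfl⟩
          rw [hcov, Finset.mem_filter]
          exact ⟨Finset.mem_univ a, σ, hσ, hsub (Finset.mem_singleton_self a)⟩
      have h2m : 2 * F.card = ∑ x : V, (F.filter (fun σ => x ∈ σ)).card := by
        rw [sum_filter_card, Finset.sum_congr rfl hF, Finset.sum_const, smul_eq_mul, mul_comm]
      have hbound : ∑ x : V, (F.filter (fun σ => x ∈ σ)).card ≤ 2 * cov.card := by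
        rw [← Finset.sum_subset (Finset.subset_univ cov) ?_]
        · calc ∑ x ∈ cov, (F.filter (fun σ => x ∈ σ)).card
              ≤ ∑ _x ∈ cov, 2 := Finset.sum_le_sum (fun x _ => hdeg x)
          _ = 2 * cov.card := by rw [Finset.sum_const, smul_eq_mul, mul_comm]
        · intro x _ hx
          rw [hcov, Finset.mem_filter] at hx
          push_neg at hx
          rw [Finset.card_eq_zero, Finset.filter_eq_empty_iff]
          intro σ hσ hxσ
          exact (hx (Finset.mem_univ x) σ hσ) hxσ
      rw [hridge]
      omega
    · push_neg at hdeg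
      obtain ⟨x, hx3⟩ := hdeg
      by_cases hpriv : ∃ σ₀ ∈ F, x ∈ σ₀ ∧ ∃ a, σ₀.erase x = {a} ∧ ∀ τ ∈ F, a ∈ τ → τ = σ₀
      · -- removal case: a page with a private second vertex
        obtain ⟨σ₀, hσ₀F, hxσ₀, a, ha_er, hapriv⟩ := hpriv
        have haσ₀ : a ∈ σ₀ :=
          Finset.mem_of_mem_erase (ha_er ▸ Finset.mem_singleton_self a)
        set F' := F.erase σ₀ with hF'
        have hsub : F' ⊆ F := Finset.erase_subset σ₀ F
        have hm' : F'.card ≤ N := by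
          rw [hF', Finset.card_erase_of_mem hσ₀F]
          omega
        have ih := ihN F' hm' (fun σ h => hF σ (hsub h)) (fun σ h => hind σ (hsub h))
          (fun σ h τ h' hne => hint σ (hsub h) τ (hsub h') hne)
        have haF : ({a} : Finset V) ∈ ridgeSet F 1 :=
          mem_ridgeSet.mpr ⟨Finset.card_singleton a, σ₀, hσ₀F,
            Finset.singleton_subset_iff.mpr haσ₀⟩
        have haF' : ({a} : Finset V) ∉ ridgeSet F' 1 := by
          intro h
          obtain ⟨-, τ, hτ, hsub'⟩ := mem_ridgeSet.mp h
          have heq := hapriv τ (hsub hτ) (hsub' (Finset.mem_singleton_self a))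
          rw [hF'] at hτ
          exact (Finset.mem_erase.mp hτ).1 heq
        have hsubr : insert ({a} : Finset V) (ridgeSet F' 1) ⊆ ridgeSet F 1 := by
          intro ρ hρ
          rcases Finset.mem_insert.mp hρ with rfl | hρ
          · exact haF
          · obtain ⟨hc, τ, hτ, hsub'⟩ := mem_ridgeSet.mp hρ
            exact mem_ridgeSet.mpr ⟨hc, τ, hsub hτ, hsub'⟩
        have hcard : (ridgeSet F' 1).card + 1 ≤ (ridgeSet F 1).card := by
          have h := Finset.card_le_card hsubr
          rwa [Finset.card_insert_of_notMem haF'] at h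
        have hFc : F.card = F'.card + 1 := by
          rw [hF', Finset.card_erase_of_mem hσ₀F,
            Nat.sub_add_cancel (Finset.card_pos.mpr ⟨σ₀, hσ₀F⟩)]
        omega
      · -- contradiction case: three pages with doors
        exfalso
        push_neg at hpriv
        set P := F.filter (fun σ => x ∈ σ) with hP
        have h1 : 0 < P.card := by omega
        obtain ⟨σ₁, hσ₁P⟩ := Finset.card_pos.mp h1
        have h2 : 0 < (P.erase σ₁).card := by
          rw [Finset.card_erase_of_mem hσ₁P]; omega
        obtain ⟨σ₂, hσ₂P'⟩ := Finset.card_pos.mp h2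
        have h3 : 0 < ((P.erase σ₁).erase σ₂).card := by
          rw [Finset.card_erase_of_mem hσ₂P', Finset.card_erase_of_mem hσ₁P]; omega
        obtain ⟨σ₃, hσ₃P''⟩ := Finset.card_pos.mp h3
        have hσ₂P : σ₂ ∈ P := Finset.mem_of_mem_erase hσ₂P'
        have hσ₃P : σ₃ ∈ P := Finset.mem_of_mem_erase (Finset.mem_of_mem_erase hσ₃P'')
        have hne12 : σ₁ ≠ σ₂ := fun h => (Finset.mem_erase.mp hσ₂P').1 h.symm
        have hne13 : σ₁ ≠ σ₃ :=
          fun h => (Finset.mem_erase.mp (Finset.mem_of_mem_erase hσ₃P'')).1 h.symm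
        have hne23 : σ₂ ≠ σ₃ := fun h => (Finset.mem_erase.mp hσ₃P'').1 h.symm
        have hdata : ∀ σ ∈ P, σ ∈ F ∧ x ∈ σ ∧
            ∃ a : V, a ≠ x ∧ σ = insert x {a} ∧ σ.erase x = {a} := by
          intro σ hσ
          rw [hP, Finset.mem_filter] at hσ
          obtain ⟨hσF, hxσ⟩ := hσ
          have hc : (σ.erase x).card = 1 := by
            rw [Finset.card_erase_of_mem hxσ, hF σ hσF]
          obtain ⟨a, ha⟩ := Finset.card_eq_one.mp hc
          have hax : a ≠ x := (Finset.mem_erase.mp (ha ▸ Finset.mem_singleton_self a)).1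
          exact ⟨hσF, hxσ, a, hax, by rw [← Finset.insert_erase hxσ, ha], ha⟩
        obtain ⟨hσ₁F, hxσ₁, a₁, ha₁x, hσ₁e, hσ₁er⟩ := hdata σ₁ hσ₁P
        obtain ⟨hσ₂F, hxσ₂, a₂, ha₂x, hσ₂e, hσ₂er⟩ := hdata σ₂ hσ₂P
        obtain ⟨hσ₃F, hxσ₃, a₃, ha₃x, hσ₃e, hσ₃er⟩ := hdata σ₃ hσ₃P
        have ha12 : a₁ ≠ a₂ := fun h => hne12 (by rw [hσ₁e, hσ₂e, h])
        have ha13 : a₁ ≠ a₃ := fun h => hne13 (by rw [hσ₁e, hσ₃e, h])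
        have ha23 : a₂ ≠ a₃ := fun h => hne23 (by rw [hσ₂e, hσ₃e, h])
        obtain ⟨τ₁, hτ₁F, ha₁τ, hτ₁ne⟩ := hpriv σ₁ hσ₁F hxσ₁ a₁ hσ₁er
        obtain ⟨τ₂, hτ₂F, ha₂τ, hτ₂ne⟩ := hpriv σ₂ hσ₂F hxσ₂ a₂ hσ₂er
        obtain ⟨τ₃, hτ₃F, ha₃τ, hτ₃ne⟩ := hpriv σ₃ hσ₃F hxσ₃ a₃ hσ₃er
        exact three_doors_contra hF hind hint ha₁x ha₂x ha₃x ha12 ha13 ha23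
          (by rw [← hσ₁e]; exact hσ₁F) (by rw [← hσ₂e]; exact hσ₂F)
          (by rw [← hσ₃e]; exact hσ₃F) hτ₁F hτ₂F hτ₃F ha₁τ ha₂τ ha₃τ
          (by rw [← hσ₁e]; exact hτ₁ne) (by rw [← hσ₂e]; exact hτ₂ne)
          (by rw [← hσ₃e]; exact hτ₃ne)

lemma cone_base : ConeProp.{u} 2 := by
  intro E _ _ V _ _ F g hF hind hint
  have h := cone_base_aux g F.card F le_rfl hF hind hint
  have he : ridgeSet F (2-1) = ridgeSet F 1 := by norm_num
  rw [he]
  omega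

theorem cone_thrackle (k : ℕ) (hk : 2 ≤ k) : ConeProp.{u} k := by
  induction k, hk using Nat.le_induction with
  | base => exact cone_base
  | succ n hn ih => exact cone_step n hn ih

end BaseInduction
section Transfer
open Finset
set_option linter.unusedSectionVars false
set_option maxHeartbeats 1000000

variable {n : ℕ} {V : Type*} [Fintype V] [DecidableEq V]

lemma lift_linIndep {f : V → EuclideanSpace ℝ (Fin n)} {σ : Finset V}
    (h : AffineIndependent ℝ (fun v : σ => f v)) :
    LinearIndependent ℝ (fun v : σ => (((1 : ℝ), f v) : ℝ × EuclideanSpace ℝ (Fin n))) := by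
  rw [Fintype.linearIndependent_iff]
  intro c hc
  have h1 : ∑ i : σ, c i = 0 := by
    have h' := congrArg Prod.fst hc
    simpa [Prod.fst_sum] using h'
  have h2 : ∑ i : σ, c i • f i = 0 := by
    have h' := congrArg Prod.snd hc
    simpa [Prod.snd_sum] using h'
  intro i
  exact affineIndependent_iff.mp h Finset.univ c h1 h2 i (Finset.mem_univ i)

lemma lift_cone_mem (f : V → EuclideanSpace ℝ (Fin n)) (σ : Finset V) {t : ℝ}
    (ht : 0 ≤ t) {q : EuclideanSpace ℝ (Fin n)} (hq : q ∈ convexHull ℝ (f '' σ)) :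
    ((t, t • q) : ℝ × EuclideanSpace ℝ (Fin n)) ∈ coneOf (fun v => ((1:ℝ), f v)) σ := by
  have hS : convexHull ℝ (f '' σ)
      ⊆ {q | (((1:ℝ), q) : ℝ × EuclideanSpace ℝ (Fin n)) ∈ coneOf (fun v => ((1:ℝ), f v)) σ} := by
    apply convexHull_min
    · rintro q ⟨v, hv, rfl⟩
      exact gen_mem_coneOf _ hv
    · intro q₁ hq₁ q₂ hq₂ a b ha hb hab
      have he : a • (((1:ℝ), q₁) : ℝ × EuclideanSpace ℝ (Fin n)) + b • ((1:ℝ), q₂)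
          = ((1:ℝ), a • q₁ + b • q₂) := by
        rw [Prod.smul_mk, Prod.smul_mk, Prod.mk_add_mk, smul_eq_mul, smul_eq_mul,
          mul_one, mul_one, hab]
      exact Set.mem_setOf.mpr (he ▸ add_mem_coneOf (smul_mem_coneOf ha hq₁)
        (smul_mem_coneOf hb hq₂))
  have h1 := hS hq
  have he : ((t, t • q) : ℝ × EuclideanSpace ℝ (Fin n)) = t • ((1:ℝ), q) := by
    rw [Prod.smul_mk, smul_eq_mul, mul_one]
  rw [he]
  exact smul_mem_coneOf ht h1

lemma lift_cone_dest (f : V → EuclideanSpace ℝ (Fin n)) (σ : Finset V)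
    {y : ℝ × EuclideanSpace ℝ (Fin n)} (hy : y ∈ coneOf (fun v => ((1:ℝ), f v)) σ) :
    y = 0 ∨ ∃ t : ℝ, 0 < t ∧ ∃ q ∈ convexHull ℝ (f '' σ), y = (t, t • q) := by
  obtain ⟨c, hc, rfl⟩ := hy
  set t := ∑ v ∈ σ, c v with htd
  have ht : 0 ≤ t := Finset.sum_nonneg (fun v _ => hc v)
  rcases eq_or_lt_of_le ht with h0 | hpos
  · left
    have hz : ∀ v ∈ σ, c v = 0 := by
      intro v hv
      exact (Finset.sum_eq_zero_iff_of_nonneg (fun v _ => hc v)).mp h0.symm v hv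
    apply Finset.sum_eq_zero
    intro v hv
    rw [hz v hv, zero_smul]
  · right
    have htne : t ≠ 0 := ne_of_gt hpos
    refine ⟨t, hpos, σ.centerMass c f, ?_, ?_⟩
    · apply Finset.centerMass_mem_convexHull σ (fun v _ => hc v) (by rw [← htd]; exact hpos)
      intro v hv
      exact Set.mem_image_of_mem f hv
    · have hfst : (∑ v ∈ σ, c v • (((1:ℝ), f v) : ℝ × EuclideanSpace ℝ (Fin n))).1 = t := by
        rw [htd, Prod.fst_sum]
        apply Finset.sum_congr rfl
        intro v _
        rw [Prod.smul_mk, smul_eq_mul, mul_one]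
      have hsnd : (∑ v ∈ σ, c v • (((1:ℝ), f v) : ℝ × EuclideanSpace ℝ (Fin n))).2
          = t • σ.centerMass c f := by
        rw [Finset.centerMass, ← htd, smul_smul, mul_inv_cancel₀ htne, one_smul, Prod.snd_sum]
        apply Finset.sum_congr rfl
        intro v _
        rw [Prod.smul_mk]
      exact Prod.ext hfst hsnd
  
lemma lift_span_rank {A : Set (EuclideanSpace ℝ (Fin n))} {q₀ : EuclideanSpace ℝ (Fin n)}
    (hq₀ : q₀ ∈ A) :
    Module.finrank ℝ (Submodule.span ℝ ((fun q => (((1:ℝ), q) : ℝ × EuclideanSpace ℝ (Fin n))) '' A))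
      = Module.finrank ℝ (affineSpan ℝ A).direction + 1 := by
  rw [direction_affineSpan]
  set D := vectorSpan ℝ A with hD
  set i2 : EuclideanSpace ℝ (Fin n) →ₗ[ℝ] ℝ × EuclideanSpace ℝ (Fin n) :=
    LinearMap.inr ℝ ℝ (EuclideanSpace ℝ (Fin n)) with hi2
  have hse : Submodule.span ℝ ((fun q => (((1:ℝ), q) : ℝ × EuclideanSpace ℝ (Fin n))) '' A)
      = Submodule.span ℝ {(((1:ℝ), q₀) : ℝ × EuclideanSpace ℝ (Fin n))} ⊔ D.map i2 := by
    apply le_antisymm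
    · rw [Submodule.span_le]
      rintro w ⟨q, hq, rfl⟩
      show (((1:ℝ), q) : ℝ × EuclideanSpace ℝ (Fin n)) ∈ _
      have he : (((1:ℝ), q) : ℝ × EuclideanSpace ℝ (Fin n))
          = ((1:ℝ), q₀) + i2 (q -ᵥ q₀) := by
        rw [hi2, LinearMap.inr_apply, vsub_eq_sub, Prod.mk_add_mk, add_zero, add_sub_cancel]
      rw [he]
      exact Submodule.add_mem _
        (Submodule.mem_sup_left (Submodule.subset_span rfl))
        (Submodule.mem_sup_right (Submodule.mem_map_of_mem (vsub_mem_vectorSpan ℝ hq hq₀)))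
    · apply sup_le
      · rw [Submodule.span_le, Set.singleton_subset_iff]
        exact Submodule.subset_span ⟨q₀, hq₀, rfl⟩
      · rw [hD, vectorSpan_def, Submodule.map_span, Submodule.span_le]
        rintro w ⟨u, hu, rfl⟩
        obtain ⟨q, hq, q', hq', rfl⟩ := Set.mem_vsub.mp hu
        have he : i2 (q -ᵥ q') = (((1:ℝ), q) : ℝ × EuclideanSpace ℝ (Fin n)) - ((1:ℝ), q') := by
          rw [hi2, LinearMap.inr_apply, vsub_eq_sub, Prod.mk_sub_mk, sub_self]
        rw [he]
        exact Submodule.sub_mem _ (Submodule.subset_span ⟨q, hq, rfl⟩)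
          (Submodule.subset_span ⟨q', hq', rfl⟩)
  rw [hse]
  have hinf : Submodule.span ℝ {(((1:ℝ), q₀) : ℝ × EuclideanSpace ℝ (Fin n))} ⊓ D.map i2 = ⊥ := by
    rw [Submodule.eq_bot_iff]
    rintro w ⟨hw1, hw2⟩
    obtain ⟨r, hr⟩ := Submodule.mem_span_singleton.mp hw1
    obtain ⟨u, _, hueq⟩ := Submodule.mem_map.mp hw2
    have h1 := congrArg Prod.fst hr
    have h2 := congrArg Prod.fst hueq
    rw [hi2, LinearMap.inr_apply] at h2
    simp only [Prod.smul_mk, smul_eq_mul, mul_one] at h1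
    have hr0 : r = 0 := by rw [h1, ← h2]
    rw [← hr, hr0, zero_smul]
  have hsum := Submodule.finrank_sup_add_finrank_inf_eq
    (Submodule.span ℝ {(((1:ℝ), q₀) : ℝ × EuclideanSpace ℝ (Fin n))}) (D.map i2)
  rw [hinf, finrank_bot] at hsum
  have h1 : Module.finrank ℝ
      (Submodule.span ℝ {(((1:ℝ), q₀) : ℝ × EuclideanSpace ℝ (Fin n))}) = 1 :=
    finrank_span_singleton (fun h => one_ne_zero (congrArg Prod.fst h))
  have h2 : Module.finrank ℝ (D.map i2) = Module.finrank ℝ D :=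
    (LinearEquiv.finrank_eq (Submodule.equivMapOfInjective i2 LinearMap.inr_injective D)).symm
  omega

end Transfer
section Final
open Finset
set_option linter.unusedSectionVars false
set_option maxHeartbeats 1000000

lemma ridge_set_eq {V : Type*} [Fintype V] [DecidableEq V] (F : Finset (Finset V)) (j : ℕ) :
    {ρ : Finset V | ρ.card = j ∧ ∃ σ ∈ F, ρ ⊆ σ} = ↑(ridgeSet F j) := by
  ext ρ
  simp [mem_ridgeSet]

/-- A linear `(d-1)`-thrackle with `m` facets and `n` ridges satisfies `d·m ≤ 2·n`:
if `F` is a family of `d`-element facets on a finite vertex set `V` and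
`f : V → ℝ^d` maps each facet to an affinely independent set, with the convex hulls
of any two distinct facets intersecting in a nonempty set of affine dimension exactly
`d - 2`, then `d·|F| ≤ 2·n` where `n` counts the `(d-1)`-element subsets of facets. -/
theorem linear_thrackle_highdim (d : ℕ) (hd : 2 ≤ d)
    {V : Type*} [Fintype V] [DecidableEq V]
    (F : Finset (Finset V)) (hF : ∀ σ ∈ F, σ.card = d)
    (f : V → EuclideanSpace ℝ (Fin d))
    (hemb : ∀ σ ∈ F, AffineIndependent ℝ (fun v : σ => f v))
    (hint : ∀ σ ∈ F, ∀ τ ∈ F, σ ≠ τ →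
      (convexHull ℝ (f '' σ) ∩ convexHull ℝ (f '' τ)).Nonempty ∧
      Module.finrank ℝ
        (affineSpan ℝ (convexHull ℝ (f '' σ) ∩ convexHull ℝ (f '' τ))).direction
        = d - 2) :
    d * F.card ≤
      2 * {ρ : Finset V | ρ.card = d - 1 ∧ ∃ σ ∈ F, ρ ⊆ σ}.ncard := by
  classical
  have hintlift : ∀ σ ∈ F, ∀ τ ∈ F, σ ≠ τ →
      (∃ y, y ∈ coneOf (fun v => (((1:ℝ), f v) : ℝ × EuclideanSpace ℝ (Fin d))) σ ∩
        coneOf (fun v => ((1:ℝ), f v)) τ ∧ y ≠ 0) ∧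
      Module.finrank ℝ (Submodule.span ℝ
        (coneOf (fun v => (((1:ℝ), f v) : ℝ × EuclideanSpace ℝ (Fin d))) σ ∩
          coneOf (fun v => ((1:ℝ), f v)) τ)) = d - 1 := by
    intro σ hσ τ hτ hne
    obtain ⟨hne_int, hrank⟩ := hint σ hσ τ hτ hne
    obtain ⟨q₀, hq₀σ, hq₀τ⟩ := hne_int
    constructor
    · refine ⟨((1:ℝ), q₀), ⟨?_, ?_⟩, fun h => one_ne_zero (congrArg Prod.fst h)⟩
      · have h1 := lift_cone_mem f σ zero_le_one hq₀σ
        rwa [one_smul] at h1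
      · have h1 := lift_cone_mem f τ zero_le_one hq₀τ
        rwa [one_smul] at h1
    · have hspan_eq : Submodule.span ℝ
          (coneOf (fun v => (((1:ℝ), f v) : ℝ × EuclideanSpace ℝ (Fin d))) σ ∩
            coneOf (fun v => ((1:ℝ), f v)) τ)
          = Submodule.span ℝ ((fun q => (((1:ℝ), q) : ℝ × EuclideanSpace ℝ (Fin d))) ''
              (convexHull ℝ (f '' σ) ∩ convexHull ℝ (f '' τ))) := by
        apply le_antisymm
        · rw [Submodule.span_le]
          rintro y ⟨hyσ, hyτ⟩
          rcases lift_cone_dest f σ hyσ with rfl | ⟨t, htpos, qσ, hqσ, hyeq⟩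
          · exact Submodule.zero_mem _
          rcases lift_cone_dest f τ hyτ with h0 | ⟨t', ht'pos, qτ, hqτ, hyeq'⟩
          · exfalso
            rw [h0] at hyeq
            have h' := congrArg Prod.fst hyeq
            simp only [Prod.fst_zero] at h'
            exact (ne_of_gt htpos) h'.symm
          · have htt : t = t' := by
              have h' := congrArg Prod.fst (hyeq.symm.trans hyeq')
              simpa using h'
            have hq : qσ = qτ := by
              have hsnd := congrArg Prod.snd (hyeq.symm.trans hyeq')
              simp only [] at hsnd
              rw [← htt] at hsnd
              exact smul_right_injective _ (ne_of_gt htpos) hsnd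
            have hyt : y = t • (((1:ℝ), qσ) : ℝ × EuclideanSpace ℝ (Fin d)) := by
              rw [hyeq, Prod.smul_mk, smul_eq_mul, mul_one]
            rw [hyt]
            have hmem : (((1:ℝ), qσ) : ℝ × EuclideanSpace ℝ (Fin d)) ∈
                (fun q => (((1:ℝ), q) : ℝ × EuclideanSpace ℝ (Fin d))) ''
                  (convexHull ℝ (f '' σ) ∩ convexHull ℝ (f '' τ)) :=
              ⟨qσ, ⟨hqσ, hq ▸ hqτ⟩, rfl⟩
            exact Submodule.smul_mem _ _ (Submodule.subset_span hmem)
        · rw [Submodule.span_le]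
          rintro w ⟨q, hq, rfl⟩
          show (((1:ℝ), q) : ℝ × EuclideanSpace ℝ (Fin d)) ∈ _
          have h1 := lift_cone_mem f σ zero_le_one hq.1
          have h2 := lift_cone_mem f τ zero_le_one hq.2
          rw [one_smul] at h1 h2
          exact Submodule.subset_span ⟨h1, h2⟩
      have hrk := lift_span_rank
        (A := convexHull ℝ (f '' ↑σ) ∩ convexHull ℝ (f '' ↑τ)) (q₀ := q₀) ⟨hq₀σ, hq₀τ⟩
      rw [hspan_eq, hrk, hrank]
      omega
  have key := cone_thrackle d hd (ℝ × EuclideanSpace ℝ (Fin d)) V F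
    (fun v => ((1:ℝ), f v)) hF (fun σ hσ => lift_linIndep (hemb σ hσ)) hintlift
  have hncard : {ρ : Finset V | ρ.card = d - 1 ∧ ∃ σ ∈ F, ρ ⊆ σ}.ncard
      = (ridgeSet F (d-1)).card := by
    rw [ridge_set_eq, Set.ncard_coe_finset]
  rw [hncard]
  exact key

end Final
end

section
/- Let d ≥ 2 and let p_0, p_1, …, p_d ∈ ℝ^d be affinely independent points. Then for any two distinct d-element subsets σ, τ ⊆ {0,1,…,d}: conv{p_i : i ∈ σ} ∩ conv{p_i : i ∈ τ} = conv{p_i : i ∈ σ ∩ τ}, and this intersection is nonempty with affine span of dimension exactly d − 2. Consequently the boundary of the d-simplex, realized linearly in ℝ^d with its m = d + 1 facets and n = d(d+1)/2 ridges, is a linear (d−1)-thrackle attaining equality d·m = 2·n. -/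
/-- The boundary of the `d`-simplex, realized linearly in `ℝ^d` by affinely
independent points `p 0, …, p d`, is a linear `(d-1)`-thrackle attaining equality
`d·m = 2·n`: any two distinct `d`-element subsets `σ, τ` of the vertex indices
satisfy `conv (p '' σ) ∩ conv (p '' τ) = conv (p '' (σ ∩ τ))`, a nonempty set whose
affine span has dimension exactly `d - 2`; moreover with `m = d + 1` facets and
`n = d(d+1)/2` ridges we have `d·m = 2·n`. -/
theorem simplex_boundary_thrackle (d : ℕ) (hd : 2 ≤ d)
    (p : Fin (d + 1) → EuclideanSpace ℝ (Fin d))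
    (hp : AffineIndependent ℝ p) :
    (∀ σ τ : Finset (Fin (d + 1)), σ.card = d → τ.card = d → σ ≠ τ →
      (convexHull ℝ (p '' σ) ∩ convexHull ℝ (p '' τ) = convexHull ℝ (p '' ↑(σ ∩ τ))) ∧
      (convexHull ℝ (p '' σ) ∩ convexHull ℝ (p '' τ)).Nonempty ∧
      Module.finrank ℝ
        (affineSpan ℝ (convexHull ℝ (p '' σ) ∩ convexHull ℝ (p '' τ))).direction
        = d - 2) ∧
    {ρ : Finset (Fin (d + 1)) | ρ.card = d - 1 ∧
        ∃ σ : Finset (Fin (d + 1)), σ.card = d ∧ ρ ⊆ σ}.ncard = d * (d + 1) / 2 ∧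
    d * (d + 1) = 2 * (d * (d + 1) / 2) := by
  classical
  have hpinj : Function.Injective p := hp.injective
  refine ⟨?_, ?_, ?_⟩
  · intro σ τ hσ hτ hne
    -- intersection cardinality
    have hcard : (σ ∩ τ).card = d - 1 := by
      have hne' : ¬ σ ⊆ τ := fun h => hne (Finset.eq_of_subset_of_card_le h (by omega))
      have h2 : (σ ∩ τ).card < d := by
        have hss : σ ∩ τ ⊂ σ := ⟨Finset.inter_subset_left,
          fun h => hne' (fun x hx => (Finset.mem_inter.mp (h hx)).2)⟩
        have := Finset.card_lt_card hss
        omega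
      have h1 : (σ ∪ τ).card ≤ d + 1 := by
        simpa using Finset.card_le_card (Finset.subset_univ (σ ∪ τ))
      have h3 := Finset.card_inter_add_card_union σ τ
      omega
    -- the set equality
    have hkey : convexHull ℝ (p '' σ) ∩ convexHull ℝ (p '' τ)
        = convexHull ℝ (p '' ↑(σ ∩ τ)) := by
      set S : Finset (EuclideanSpace ℝ (Fin d)) := Finset.univ.image p with hSdef
      have hrange : (S : Set (EuclideanSpace ℝ (Fin d))) = Set.range p := by
        simp [hSdef]
      have hai : AffineIndependent ℝ ((↑) : S → EuclideanSpace ℝ (Fin d)) := by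
        have h := hp.range
        rw [← hrange] at h
        exact h
      have h := hai.convexHull_inter (t₁ := σ.image p) (t₂ := τ.image p)
        (Finset.image_subset_image (Finset.subset_univ σ))
        (Finset.image_subset_image (Finset.subset_univ τ))
      rw [← Finset.coe_inter, ← Finset.image_inter σ τ hpinj] at h
      simpa [Finset.coe_image] using h.symm
    refine ⟨hkey, ?_, ?_⟩
    · rw [hkey]
      have : (σ ∩ τ).Nonempty := Finset.card_pos.mp (by omega)
      rcases this with ⟨i, hi⟩
      exact ⟨p i, subset_convexHull ℝ _ ⟨i, by simpa using hi, rfl⟩⟩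
    · rw [hkey]
      have himg : p '' ↑(σ ∩ τ) = ↑((σ ∩ τ).image p) := by simp [Finset.coe_image]
      rw [affineSpan_convexHull, direction_affineSpan, himg]
      exact hp.finrank_vectorSpan_image_finset (by omega)
  · have hset : {ρ : Finset (Fin (d + 1)) | ρ.card = d - 1 ∧
        ∃ σ : Finset (Fin (d + 1)), σ.card = d ∧ ρ ⊆ σ}
        = ↑(Finset.powersetCard (d - 1) (Finset.univ : Finset (Fin (d + 1)))) := by
      ext ρ
      simp only [Set.mem_setOf_eq, Finset.mem_coe, Finset.mem_powersetCard,
        Finset.subset_univ, true_and]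
      constructor
      · rintro ⟨h, -⟩; exact h
      · rintro h
        refine ⟨h, ?_⟩
        obtain ⟨σ, hρσ, -, hσ⟩ := Finset.exists_subsuperset_card_eq (n := d)
          (Finset.subset_univ ρ) (by omega)
          (by simp only [Finset.card_univ, Fintype.card_fin]; omega)
        exact ⟨σ, hσ, hρσ⟩
    rw [hset, Set.ncard_coe_finset, Finset.card_powersetCard, Finset.card_univ,
      Fintype.card_fin]
    have h1 : (d + 1).choose (d - 1) = (d + 1).choose 2 := by
      rw [← Nat.choose_symm (by omega)]
      congr 1
      omega
    rw [h1, Nat.choose_two_right]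
    simp [Nat.mul_comm]
  · obtain ⟨k, hk⟩ := Nat.even_mul_succ_self d
    omega
end

section
/- In ℝ³, let e_1, e_2, e_3 be the standard basis vectors, let V = {e_1, −e_1, e_2, −e_2, e_3, −e_3} (so |V| = 6) and W = V ∪ {0} (so |W| = 7). Define the seven sets C_1 = conv{e_1, e_2, e_3}, C_2 = conv{e_1, −e_2, −e_3}, C_3 = conv{−e_1, e_2, −e_3}, C_4 = conv{−e_1, −e_2, e_3}, C_5 = conv{e_1, −e_1}, C_6 = conv{e_2, −e_2}, C_7 = conv{e_3, −e_3}. Then C_1, …, C_7 are pairwise distinct convex hulls of subsets of V and |C_i ∩ C_j ∩ W| = 1 for all i ≠ j, while the number of sets, 7, exceeds |V| = 6. -/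
local notation "E3" => EuclideanSpace ℝ (Fin 3)

noncomputable def thrE (i : Fin 3) : E3 := EuclideanSpace.single i 1

noncomputable def thrP : Fin 7 → E3 := ![0, thrE 0, -thrE 0, thrE 1, -thrE 1, thrE 2, -thrE 2]

lemma thrP_0 : thrP 0 = 0 := rfl
lemma thrP_1 : thrP 1 = thrE 0 := rfl
lemma thrP_2 : thrP 2 = -thrE 0 := rfl
lemma thrP_3 : thrP 3 = thrE 1 := rfl
lemma thrP_4 : thrP 4 = -thrE 1 := rfl
lemma thrP_5 : thrP 5 = thrE 2 := rfl
lemma thrP_6 : thrP 6 = -thrE 2 := rfl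

def thrT : Fin 7 → Finset (Fin 7) :=
  ![{1,3,5},{1,4,6},{2,3,6},{2,4,5},{0,1,2},{0,3,4},{0,5,6}]

lemma thr_lin (a : Fin 3 → ℝ) :
    IsLinearMap ℝ (fun x : E3 => a 0 * x 0 + a 1 * x 1 + a 2 * x 2) := by
  constructor <;> intros <;> simp <;> ring

lemma thr_notMemHull (a : Fin 3 → ℝ) (c : ℝ) (S : Set E3)
    (hS : ∀ x ∈ S, a 0 * x 0 + a 1 * x 1 + a 2 * x 2 = c) {y : E3}
    (hy : ¬ (a 0 * y 0 + a 1 * y 1 + a 2 * y 2 = c)) : y ∉ convexHull ℝ S := fun h =>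
  hy (convexHull_min hS (convex_hyperplane (thr_lin a) c) h)

lemma thr_zero_mem (x : E3) : (0 : E3) ∈ convexHull ℝ {x, -x} := by
  rw [convexHull_pair]
  exact ⟨1/2, 1/2, by norm_num, by norm_num, by norm_num, by module⟩

lemma thr_zero_mem_seg (x : E3) : (0 : E3) ∈ segment ℝ x (-x) :=
  ⟨1/2, 1/2, by norm_num, by norm_num, by norm_num, by module⟩

lemma thr_notMemSeg (a : Fin 3 → ℝ) (c : ℝ) (u v : E3)
    (hu : a 0 * u 0 + a 1 * u 1 + a 2 * u 2 = c)
    (hv : a 0 * v 0 + a 1 * v 1 + a 2 * v 2 = c) {y : E3}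
    (hy : ¬ (a 0 * y 0 + a 1 * y 1 + a 2 * y 2 = c)) : y ∉ segment ℝ u v := by
  rw [← convexHull_pair]
  exact thr_notMemHull a c _ (by rintro x (rfl | rfl) <;> assumption) hy

lemma thrP_inj : Function.Injective thrP := by
  intro a b h
  fin_cases a <;> fin_cases b <;> first
    | rfl
    | (exfalso
       have h0 := congrArg (fun v : E3 => v 0) h
       have h1 := congrArg (fun v : E3 => v 1) h
       have h2 := congrArg (fun v : E3 => v 2) h
       first
         | (norm_num [thrP, thrE, EuclideanSpace.single_apply, Matrix.cons_val_succ,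
           Fin.ext_iff] at h0; done)
         | (norm_num [thrP, thrE, EuclideanSpace.single_apply, Matrix.cons_val_succ,
           Fin.ext_iff] at h1; done)
         | (norm_num [thrP, thrE, EuclideanSpace.single_apply, Matrix.cons_val_succ,
           Fin.ext_iff] at h2; done))

/-- Counterexample to the thrackle-of-convex-sets conjecture in `ℝ³`: with
`V = {±e₁, ±e₂, ±e₃}` (6 points), `W = V ∪ {0}`, the four triangles
`conv {e₁,e₂,e₃}`, `conv {e₁,-e₂,-e₃}`, `conv {-e₁,e₂,-e₃}`, `conv {-e₁,-e₂,e₃}`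
and the three segments `conv {±eᵢ}` are seven pairwise distinct convex hulls of
subsets of `V` with `|Cᵢ ∩ Cⱼ ∩ W| = 1` for all `i ≠ j`, while `7 > |V| = 6`. -/
theorem thrackle_convex_sets_fails_in_R3 :
    let e : Fin 3 → EuclideanSpace ℝ (Fin 3) := fun i => EuclideanSpace.single i (1 : ℝ)
    let V : Set (EuclideanSpace ℝ (Fin 3)) := {e 0, -e 0, e 1, -e 1, e 2, -e 2}
    let W : Set (EuclideanSpace ℝ (Fin 3)) := insert 0 V
    let C : Fin 7 → Set (EuclideanSpace ℝ (Fin 3)) :=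
      ![convexHull ℝ {e 0, e 1, e 2}, convexHull ℝ {e 0, -e 1, -e 2},
        convexHull ℝ {-e 0, e 1, -e 2}, convexHull ℝ {-e 0, -e 1, e 2},
        convexHull ℝ {e 0, -e 0}, convexHull ℝ {e 1, -e 1}, convexHull ℝ {e 2, -e 2}]
    V.ncard = 6 ∧ W.ncard = 7 ∧
    (∀ i, ∃ S : Set (EuclideanSpace ℝ (Fin 3)), S ⊆ V ∧ C i = convexHull ℝ S) ∧
    Function.Injective C ∧
    (∀ i j, i ≠ j → (C i ∩ C j ∩ W).ncard = 1) := by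
  intro e V W C
  have he : ∀ i, e i = thrE i := fun i => rfl
  have hW : W = Set.range thrP := by
    show insert (0 : E3) {e 0, -e 0, e 1, -e 1, e 2, -e 2} = _
    simp only [he]
    ext x
    simp [thrP, Matrix.range_cons, Matrix.range_empty]
    tauto
  have memW : ∀ k, thrP k ∈ W := fun k => hW ▸ Set.mem_range_self k
  have hV : V = thrP '' ↑({1,2,3,4,5,6} : Finset (Fin 7)) := by
    show ({e 0, -e 0, e 1, -e 1, e 2, -e 2} : Set E3) = _
    simp only [he]
    norm_num [Finset.coe_insert, Set.image_insert_eq, Finset.coe_singleton,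
      Set.image_singleton, thrP_0, thrP_1, thrP_2, thrP_3, thrP_4, thrP_5, thrP_6]
  have hC : ∀ i, C i ∩ W = thrP '' ↑(thrT i) := by
    intro i
    apply subset_antisymm
    · rintro x ⟨hxC, hxW⟩
      rw [hW] at hxW
      obtain ⟨k, rfl⟩ := hxW
      refine ⟨k, Finset.mem_coe.mpr ?_, rfl⟩
      fin_cases i
      · norm_num [C, Matrix.cons_val_succ] at hxC
        fin_cases k <;>
          first
            | decide
            | exact absurd hxC (thr_notMemHull ![1,1,1] 1 _ (by rintro x (rfl | rfl | rfl) <;> norm_num [he, thrE, EuclideanSpace.single_apply, Fin.ext_iff, Matrix.cons_val_succ, Matrix.cons_val_two, Matrix.tail_cons, Matrix.head_cons]) (by norm_num [thrP, thrE, EuclideanSpace.single_apply, Matrix.cons_val_succ, Fin.ext_iff, Matrix.cons_val_two, Matrix.tail_cons, Matrix.head_cons]))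
      · norm_num [C, Matrix.cons_val_succ] at hxC
        fin_cases k <;>
          first
            | decide
            | exact absurd hxC (thr_notMemHull ![1,-1,-1] 1 _ (by rintro x (rfl | rfl | rfl) <;> norm_num [he, thrE, EuclideanSpace.single_apply, Fin.ext_iff, Matrix.cons_val_succ, Matrix.cons_val_two, Matrix.tail_cons, Matrix.head_cons]) (by norm_num [thrP, thrE, EuclideanSpace.single_apply, Matrix.cons_val_succ, Fin.ext_iff, Matrix.cons_val_two, Matrix.tail_cons, Matrix.head_cons]))
      · norm_num [C, Matrix.cons_val_succ] at hxC
        fin_cases k <;>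
          first
            | decide
            | exact absurd hxC (thr_notMemHull ![-1,1,-1] 1 _ (by rintro x (rfl | rfl | rfl) <;> norm_num [he, thrE, EuclideanSpace.single_apply, Fin.ext_iff, Matrix.cons_val_succ, Matrix.cons_val_two, Matrix.tail_cons, Matrix.head_cons]) (by norm_num [thrP, thrE, EuclideanSpace.single_apply, Matrix.cons_val_succ, Fin.ext_iff, Matrix.cons_val_two, Matrix.tail_cons, Matrix.head_cons]))
      · norm_num [C, Matrix.cons_val_succ] at hxC
        fin_cases k <;>
          first
            | decide
            | exact absurd hxC (thr_notMemHull ![-1,-1,1] 1 _ (by rintro x (rfl | rfl | rfl) <;> norm_num [he, thrE, EuclideanSpace.single_apply, Fin.ext_iff, Matrix.cons_val_succ, Matrix.cons_val_two, Matrix.tail_cons, Matrix.head_cons]) (by norm_num [thrP, thrE, EuclideanSpace.single_apply, Matrix.cons_val_succ, Fin.ext_iff, Matrix.cons_val_two, Matrix.tail_cons, Matrix.head_cons]))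
      · norm_num [C, Matrix.cons_val_succ] at hxC
        fin_cases k <;>
          first
            | decide
            | (refine absurd hxC (thr_notMemSeg ![0,1,0] 0 _ _ ?_ ?_ ?_) <;> (norm_num [he, thrP, thrE, EuclideanSpace.single_apply, Fin.ext_iff, Matrix.cons_val_succ, Matrix.cons_val_two, Matrix.tail_cons, Matrix.head_cons]; done))
            | (refine absurd hxC (thr_notMemSeg ![0,0,1] 0 _ _ ?_ ?_ ?_) <;> (norm_num [he, thrP, thrE, EuclideanSpace.single_apply, Fin.ext_iff, Matrix.cons_val_succ, Matrix.cons_val_two, Matrix.tail_cons, Matrix.head_cons]; done))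
      · norm_num [C, Matrix.cons_val_succ] at hxC
        fin_cases k <;>
          first
            | decide
            | (refine absurd hxC (thr_notMemSeg ![1,0,0] 0 _ _ ?_ ?_ ?_) <;> (norm_num [he, thrP, thrE, EuclideanSpace.single_apply, Fin.ext_iff, Matrix.cons_val_succ, Matrix.cons_val_two, Matrix.tail_cons, Matrix.head_cons]; done))
            | (refine absurd hxC (thr_notMemSeg ![0,0,1] 0 _ _ ?_ ?_ ?_) <;> (norm_num [he, thrP, thrE, EuclideanSpace.single_apply, Fin.ext_iff, Matrix.cons_val_succ, Matrix.cons_val_two, Matrix.tail_cons, Matrix.head_cons]; done))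
      · norm_num [C, Matrix.cons_val_succ] at hxC
        fin_cases k <;>
          first
            | decide
            | (refine absurd hxC (thr_notMemSeg ![1,0,0] 0 _ _ ?_ ?_ ?_) <;> (norm_num [he, thrP, thrE, EuclideanSpace.single_apply, Fin.ext_iff, Matrix.cons_val_succ, Matrix.cons_val_two, Matrix.tail_cons, Matrix.head_cons]; done))
            | (refine absurd hxC (thr_notMemSeg ![0,1,0] 0 _ _ ?_ ?_ ?_) <;> (norm_num [he, thrP, thrE, EuclideanSpace.single_apply, Fin.ext_iff, Matrix.cons_val_succ, Matrix.cons_val_two, Matrix.tail_cons, Matrix.head_cons]; done))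
    · rintro x ⟨k, hk, rfl⟩
      refine ⟨?_, memW k⟩
      rw [Finset.mem_coe] at hk
      fin_cases i <;>
        norm_num [C, Matrix.cons_val_succ] <;>
        fin_cases k <;>
          first
            | exact absurd hk (by decide)
            | exact thr_zero_mem_seg _
            | exact left_mem_segment ℝ _ _
            | exact right_mem_segment ℝ _ _
            | exact subset_convexHull ℝ _
                (by norm_num [he, thrP, Matrix.cons_val_succ])
  refine ⟨?_, ?_, ?_, ?_, ?_⟩
  · rw [hV, Set.ncard_image_of_injective _ thrP_inj, Set.ncard_coe_finset]
    decide
  · rw [hW, ← Set.image_univ, Set.ncard_image_of_injective _ thrP_inj, Set.ncard_univ]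
    simp
  · intro i
    fin_cases i
    · exact ⟨{e 0, e 1, e 2}, by rintro x (rfl|rfl|rfl) <;> (show _ ∈ ({e 0, -e 0, e 1, -e 1, e 2, -e 2} : Set E3)) <;> simp only [Set.mem_insert_iff, Set.mem_singleton_iff] <;> tauto, rfl⟩
    · exact ⟨{e 0, -e 1, -e 2}, by rintro x (rfl|rfl|rfl) <;> (show _ ∈ ({e 0, -e 0, e 1, -e 1, e 2, -e 2} : Set E3)) <;> simp only [Set.mem_insert_iff, Set.mem_singleton_iff] <;> tauto, rfl⟩
    · exact ⟨{-e 0, e 1, -e 2}, by rintro x (rfl|rfl|rfl) <;> (show _ ∈ ({e 0, -e 0, e 1, -e 1, e 2, -e 2} : Set E3)) <;> simp only [Set.mem_insert_iff, Set.mem_singleton_iff] <;> tauto, rfl⟩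
    · exact ⟨{-e 0, -e 1, e 2}, by rintro x (rfl|rfl|rfl) <;> (show _ ∈ ({e 0, -e 0, e 1, -e 1, e 2, -e 2} : Set E3)) <;> simp only [Set.mem_insert_iff, Set.mem_singleton_iff] <;> tauto, rfl⟩
    · exact ⟨{e 0, -e 0}, by rintro x (rfl|rfl) <;> (show _ ∈ ({e 0, -e 0, e 1, -e 1, e 2, -e 2} : Set E3)) <;> simp only [Set.mem_insert_iff, Set.mem_singleton_iff] <;> tauto, rfl⟩
    · exact ⟨{e 1, -e 1}, by rintro x (rfl|rfl) <;> (show _ ∈ ({e 0, -e 0, e 1, -e 1, e 2, -e 2} : Set E3)) <;> simp only [Set.mem_insert_iff, Set.mem_singleton_iff] <;> tauto, rfl⟩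
    · exact ⟨{e 2, -e 2}, by rintro x (rfl|rfl) <;> (show _ ∈ ({e 0, -e 0, e 1, -e 1, e 2, -e 2} : Set E3)) <;> simp only [Set.mem_insert_iff, Set.mem_singleton_iff] <;> tauto, rfl⟩
  · intro i j hij
    have h1 : C i ∩ W = C j ∩ W := by rw [hij]
    rw [hC i, hC j] at h1
    have h2 : (thrT i : Set (Fin 7)) = (thrT j : Set (Fin 7)) :=
      Set.image_injective.mpr thrP_inj h1
    have h3 : thrT i = thrT j := Finset.coe_injective h2
    revert h3
    fin_cases i <;> fin_cases j <;> decide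
  · intro i j hij
    have h1 : C i ∩ C j ∩ W = thrP '' ↑(thrT i ∩ thrT j) := by
      rw [Set.inter_inter_distrib_right, hC i, hC j, Finset.coe_inter,
        Set.image_inter thrP_inj]
    rw [h1, Set.ncard_image_of_injective _ thrP_inj, Set.ncard_coe_finset]
    revert hij
    fin_cases i <;> fin_cases j <;> decide
end

section
/- Let (P, L) be a finite projective plane: finite types of points and lines with a membership relation such that any two distinct points lie on a unique line, any two distinct lines meet in a unique point, and there exist four points no three of which are collinear (as in Mathlib's Configuration.ProjectivePlane). Let v : P → ℝ² be an injective map such that every point of v(P) is an extreme point of conv(v(P)) (the points are in convex position). For each line ℓ set C_ℓ = conv{v(p) : p ∈ ℓ}. Then: (i) the map ℓ ↦ C_ℓ is injective; (ii) for any two distinct lines ℓ ≠ ℓ', the set C_ℓ ∩ C_{ℓ'} ∩ v(P) has exactly one element. Hence, taking W = V = v(P), the sets {C_ℓ : ℓ ∈ L} form a thrackle of convex sets whose number of members equals |L| = |P| = |V|. -/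
/-- Tight examples for the thrackle-of-convex-sets conjecture from finite projective
planes: if `(P, L)` is a finite projective plane and `v : P → ℝ²` an injective map
placing the points in convex position (each `v p` is an extreme point of the convex
hull of the image), then the convex hulls `C ℓ = conv (v '' ℓ)` of the lines are
pairwise distinct, any two distinct ones meet the vertex set `v(P)` in exactly one
common point, and the number of these convex sets equals the number of vertices. -/
theorem projective_plane_thrackle (P L : Type*) [Membership P L]
    [Configuration.ProjectivePlane P L] [Fintype P] [Fintype L]
    (v : P → EuclideanSpace ℝ (Fin 2)) (hv : Function.Injective v)
    (hconv : ∀ p : P, v p ∈ Set.extremePoints ℝ (convexHull ℝ (Set.range v))) :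
    Function.Injective (fun ℓ : L => convexHull ℝ (v '' {p : P | p ∈ ℓ})) ∧
    (∀ ℓ ℓ' : L, ℓ ≠ ℓ' →
      (convexHull ℝ (v '' {p : P | p ∈ ℓ}) ∩ convexHull ℝ (v '' {p : P | p ∈ ℓ'}) ∩
        Set.range v).ncard = 1) ∧
    Fintype.card L = Fintype.card P ∧
    Fintype.card P = (Set.range v).ncard := by
  -- Key fact: if `v q` lies in the convex hull of `v '' S`, then `q ∈ S`.
  have key : ∀ (S : Set P) (q : P), v q ∈ convexHull ℝ (v '' S) → q ∈ S := by
    intro S q hq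
    have hsub : convexHull ℝ (v '' S) ⊆ convexHull ℝ (Set.range v) :=
      convexHull_mono (Set.image_subset_range v S)
    obtain ⟨-, hext⟩ := hconv q
    have hq' : v q ∈ (convexHull ℝ (v '' S)).extremePoints ℝ :=
      ⟨hq, fun x₁ h₁ x₂ h₂ hseg => hext (hsub h₁) (hsub h₂) hseg⟩
    have := extremePoints_convexHull_subset hq'
    obtain ⟨p, hp, hpq⟩ := this
    exact (hv hpq) ▸ hp
  have memhull : ∀ (ℓ : L) (p : P), p ∈ ℓ →
      v p ∈ convexHull ℝ (v '' {p : P | p ∈ ℓ}) := fun ℓ p hp =>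
    subset_convexHull ℝ _ ⟨p, hp, rfl⟩
  -- two distinct points on every line
  have two_pts : ∀ ℓ : L, ∃ p q : P, p ≠ q ∧ p ∈ ℓ ∧ q ∈ ℓ := by
    intro ℓ
    have h := Configuration.ProjectivePlane.two_lt_pointCount P ℓ
    rw [Configuration.pointCount] at h
    have : Nontrivial {p : P // p ∈ ℓ} := Finite.one_lt_card_iff_nontrivial.mp (by omega)
    obtain ⟨⟨p, hp⟩, ⟨q, hq⟩, hne⟩ := this
    exact ⟨p, q, fun h => hne (Subtype.ext h), hp, hq⟩
  refine ⟨?_, ?_, ?_, ?_⟩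
  · intro ℓ ℓ' h
    simp only at h
    by_contra hne
    obtain ⟨p, q, hpq, hp, hq⟩ := two_pts ℓ
    have hp' : p ∈ ℓ' := key _ p (h ▸ memhull ℓ p hp)
    have hq' : q ∈ ℓ' := key _ q (h ▸ memhull ℓ q hq)
    exact hpq ((Configuration.Nondegenerate.eq_or_eq hp hq hp' hq').resolve_right hne)
  · intro ℓ ℓ' hne
    have hax := Configuration.HasPoints.mkPoint_ax (P := P) hne
    have : (convexHull ℝ (v '' {p : P | p ∈ ℓ}) ∩ convexHull ℝ (v '' {p : P | p ∈ ℓ'}) ∩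
        Set.range v) = {v (Configuration.HasPoints.mkPoint hne)} := by
      ext x
      constructor
      · rintro ⟨⟨h1, h2⟩, q, rfl⟩
        have hq : q ∈ ℓ := key _ q h1
        have hq' : q ∈ ℓ' := key _ q h2
        have := (Configuration.Nondegenerate.eq_or_eq hq hax.1 hq' hax.2).resolve_right hne
        simp [this]
      · rintro rfl
        exact ⟨⟨memhull ℓ _ hax.1, memhull ℓ' _ hax.2⟩, _, rfl⟩
    rw [this, Set.ncard_singleton]
  · exact (Configuration.ProjectivePlane.card_points_eq_card_lines P L).symm
  · rw [← Set.image_univ, Set.ncard_image_of_injective _ hv, Set.ncard_univ,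
      Nat.card_eq_fintype_card]
end

section
/- Let d ≥ 1 be an integer and c ≥ 0 a real number. Let V be a finite set and F a finite family of (d+1)-element subsets of V (the facets of a pure d-dimensional simplicial complex), and let R = {ρ ⊆ V : |ρ| = d and ρ ⊆ σ for some σ ∈ F} be the set of ridges. Suppose that for every vertex v ∈ V the link inequality d · |{σ ∈ F : v ∈ σ}| ≤ 2c · |{ρ ∈ R : v ∈ ρ}| holds. Then (d+1) · |F| ≤ 2c · |R|. -/
/-- Double-counting: summing over all vertices the number of members containing
that vertex equals the sum of the cardinalities of the members. -/
lemma sum_count_mem {V : Type*} [Fintype V] [DecidableEq V] (F : Finset (Finset V)) :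
    ∑ v : V, (F.filter (fun σ => v ∈ σ)).card = ∑ σ ∈ F, σ.card := by
  simp only [Finset.card_filter]
  rw [Finset.sum_comm]
  refine Finset.sum_congr rfl fun σ _ => ?_
  rw [← Finset.card_filter, Finset.filter_univ_mem]

/-- Double-counting transfer lemma: let `F` be the facet set of a pure
`d`-dimensional complex (each facet has `d + 1` vertices) on a finite vertex set
`V`, with ridge set `R` (the `d`-element subsets of facets). If every vertex link
satisfies the thrackle-type inequality
`d · #(facets containing v) ≤ 2c · #(ridges containing v)`, then
`(d+1) · |F| ≤ 2c · |R|`. -/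
theorem link_inequality_transfer (d : ℕ) (hd : 1 ≤ d) (c : ℝ) (hc : 0 ≤ c)
    {V : Type*} [Fintype V] [DecidableEq V]
    (F : Finset (Finset V)) (hF : ∀ σ ∈ F, σ.card = d + 1)
    (R : Set (Finset V))
    (hR : R = {ρ : Finset V | ρ.card = d ∧ ∃ σ ∈ F, ρ ⊆ σ})
    (hlink : ∀ v : V,
      (d : ℝ) * {σ : Finset V | σ ∈ F ∧ v ∈ σ}.ncard ≤
        2 * c * {ρ : Finset V | ρ ∈ R ∧ v ∈ ρ}.ncard) :
    ((d : ℝ) + 1) * F.card ≤ 2 * c * R.ncard := by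
  classical
  -- realize R as a Finset
  set RF : Finset (Finset V) :=
    Finset.univ.filter (fun ρ => ρ.card = d ∧ ∃ σ ∈ F, ρ ⊆ σ) with hRF
  have hRcoe : R = ↑RF := by
    rw [hR]; ext ρ; simp [hRF]
  -- rewrite ncards in hlink
  have hFset : ∀ v : V, {σ : Finset V | σ ∈ F ∧ v ∈ σ}.ncard
      = (F.filter (fun σ => v ∈ σ)).card := by
    intro v
    rw [show {σ : Finset V | σ ∈ F ∧ v ∈ σ} = ↑(F.filter (fun σ => v ∈ σ)) by
      ext σ; simp]
    exact Set.ncard_coe_finset _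
  have hRset : ∀ v : V, {ρ : Finset V | ρ ∈ R ∧ v ∈ ρ}.ncard
      = (RF.filter (fun ρ => v ∈ ρ)).card := by
    intro v
    rw [show {ρ : Finset V | ρ ∈ R ∧ v ∈ ρ} = ↑(RF.filter (fun ρ => v ∈ ρ)) by
      ext ρ; simp [hRcoe]]
    exact Set.ncard_coe_finset _
  -- sum the link inequalities over all vertices
  have hsum : (d : ℝ) * ∑ v : V, ((F.filter (fun σ => v ∈ σ)).card : ℝ)
      ≤ 2 * c * ∑ v : V, ((RF.filter (fun ρ => v ∈ ρ)).card : ℝ) := by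
    rw [Finset.mul_sum, Finset.mul_sum]
    apply Finset.sum_le_sum
    intro v _
    have := hlink v
    rwa [hFset, hRset] at this
  -- evaluate the two sums
  have hFsum : ∑ v : V, ((F.filter (fun σ => v ∈ σ)).card : ℝ)
      = ((d : ℝ) + 1) * F.card := by
    rw [← Nat.cast_sum, sum_count_mem]
    rw [Finset.sum_congr rfl hF, Finset.sum_const, smul_eq_mul]
    push_cast
    ring
  have hRbound : ∑ v : V, ((RF.filter (fun ρ => v ∈ ρ)).card : ℝ)
      = (d : ℝ) * RF.card := by
    rw [← Nat.cast_sum, sum_count_mem]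
    rw [Finset.sum_congr rfl (fun ρ hρ => (Finset.mem_filter.mp hρ).2.1),
      Finset.sum_const, smul_eq_mul]
    push_cast
    ring
  rw [hFsum, hRbound] at hsum
  have hdpos : (0 : ℝ) < d := by exact_mod_cast hd
  have key : (d : ℝ) * (((d : ℝ) + 1) * F.card) ≤ (d : ℝ) * (2 * c * RF.card) := by
    calc (d : ℝ) * (((d : ℝ) + 1) * F.card) ≤ 2 * c * ((d : ℝ) * RF.card) := hsum
      _ = (d : ℝ) * (2 * c * RF.card) := by ring
  have := le_of_mul_le_mul_left key hdpos
  rwa [hRcoe, Set.ncard_coe_finset]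
end
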